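/- arXiv:1306.3936 — 3 statements merged into one kernel-verified Lean document; each statement's English description precedes it below -/
import Mathlib

section
/- Let X be a complete, doubling, uniformly perfect metric space and let E ⊆ X be an (α_n)-regular set. If (α_n) ∈ ℓ^0 (i.e. Σ_n α_n^p < ∞ for every p > 0), then E is fat, i.e. μ(E) > 0 for every doubling measure μ on X. -/
open MeasureTheory Metric Set Filter

/-- A measure is doubling with constant `C`:
`0 < μ(B(x,2r)) ≤ C·μ(B(x,r)) < ∞` for all `x` and `r > 0`. -/
def IsDoublingWith {X : Type*} [MetricSpace X] [MeasurableSpace X]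
    (μ : Measure X) (C : NNReal) : Prop :=
  ∀ (x : X) (r : ℝ), 0 < r →
    0 < μ (ball x (2 * r)) ∧ μ (ball x (2 * r)) ≤ (C : ENNReal) * μ (ball x r) ∧
      (C : ENNReal) * μ (ball x r) < ⊤

/-- A doubling measure: doubling with some constant `C ≥ 1`. -/
def IsDoublingMeasure {X : Type*} [MetricSpace X] [MeasurableSpace X]
    (μ : Measure X) : Prop :=
  ∃ C : NNReal, 1 ≤ C ∧ IsDoublingWith μ C

/-- A uniformly perfect metric space. -/
def UniformlyPerfect (X : Type*) [MetricSpace X] : Prop :=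
  (∃ x y : X, x ≠ y) ∧
    ∃ D : ℝ, 1 ≤ D ∧ ∀ (x : X) (r : ℝ), 0 < r →
      ((Set.univ : Set X) \ ball x r).Nonempty → (ball x r \ ball x (r / D)).Nonempty

/-- A (metrically) doubling space: there is `N` such that every ball of radius `r`
is covered by `N` balls of radius `r/2`. -/
def DoublingSpace (X : Type*) [MetricSpace X] : Prop :=
  ∃ N : ℕ, ∀ (x : X) (r : ℝ), 0 < r →
    ∃ s : Finset X, s.card ≤ N ∧ ball x r ⊆ ⋃ y ∈ s, ball y (r / 2)

/-- Ahlfors `q`-regularity of the measure `H` with constant `C`. -/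
def AhlforsRegular {X : Type*} [MetricSpace X] [MeasurableSpace X]
    (H : Measure X) (q C : ℝ) : Prop :=
  ∀ (x : X) (r : ℝ), 0 < r →
    ENNReal.ofReal (r ^ q / C) ≤ H (ball x r) ∧ H (ball x r) ≤ ENNReal.ofReal (C * r ^ q)

/-- An `(α n)`-regular structure on `X`: Borel "cubes" `Q n i` (for `i ∈ idx n`) with
centers `ctr n i`, radii `rad n i` and constants `d, C₁, C₂, C₃(·)` satisfying
conditions (I)-(V) of Ojala's definition of `(α n)`-regular sets. -/
structure RegularStructure (X : Type*) [MetricSpace X] [MeasurableSpace X]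
    (α : ℕ → ℝ) where
  idx : ℕ → Set ℕ
  Q : ℕ → ℕ → Set X
  ctr : ℕ → ℕ → X
  rad : ℕ → ℕ → ℝ
  d : ℝ
  C₁ : ℝ
  C₂ : ℝ
  C₃ : ℝ → ℝ
  d_pos : 0 < d
  d_le_one : d ≤ 1
  one_le_C₁ : 1 ≤ C₁
  one_le_C₂ : 1 ≤ C₂
  borel : ∀ n, ∀ i ∈ idx n, MeasurableSet (Q n i)
  rad_pos : ∀ n, ∀ i ∈ idx n, 0 < rad n i
  -- (I): each level partitions the space
  cover : ∀ (n : ℕ) (x : X), ∃ i ∈ idx n, x ∈ Q n i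
  pairwise_disj : ∀ n, ∀ i ∈ idx n, ∀ j ∈ idx n, i ≠ j → Q n i ∩ Q n j = ∅
  -- (II): nestedness
  nested : ∀ k m, m ≤ k → ∀ i ∈ idx k, ∀ j ∈ idx m, Q k i ∩ Q m j = ∅ ∨ Q k i ⊆ Q m j
  -- (III): cubes squeezed between balls
  ball_subset : ∀ n, ∀ i ∈ idx n, ball (ctr n i) (rad n i) ⊆ Q n i
  subset_ball : ∀ n, ∀ i ∈ idx n, Q n i ⊆ ball (ctr n i) (C₁ * rad n i)
  -- (IV): size of the child cube containing the center
  center_lower : ∀ n, ∀ i ∈ idx n, ∀ j ∈ idx (n + 1), ctr n i ∈ Q (n + 1) j →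
    (1 / C₂) * α n ^ (1 / d) * rad n i ≤ rad (n + 1) j
  center_upper : ∀ n, ∀ i ∈ idx n, ∀ j ∈ idx (n + 1), ctr n i ∈ Q (n + 1) j →
    rad (n + 1) j ≤ C₂ * α n ^ d * rad n i
  center_proper : ∀ n, ∀ i ∈ idx n, ∀ j ∈ idx (n + 1), ctr n i ∈ Q (n + 1) j →
    (Q n i \ Q (n + 1) j).Nonempty
  -- (V): comparability of radii of nearby cubes of the same level
  one_le_C₃ : ∀ T : ℝ, 1 < T → 1 ≤ C₃ T
  comparable : ∀ T : ℝ, 1 < T → ∀ n, ∀ i ∈ idx n, ∀ j ∈ idx n,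
    (Q n i ∩ ball (ctr n j) (T * rad n j)).Nonempty →
    (1 / C₃ T) * rad n j ≤ rad n i ∧ rad n i ≤ C₃ T * rad n j

namespace RegularStructure

variable {X : Type*} [MetricSpace X] [MeasurableSpace X] {α : ℕ → ℝ}

open scoped Classical

/-- `E_n`: the union over `i ∈ N_n` of `Q_{n,i} ∖ Q_{n+1,j(i)}` where `j(i)` is the
index of the `(n+1)`-cube containing the center `x_{n,i}`. -/
def level (S : RegularStructure X α) (n : ℕ) : Set X :=
  {x | ∃ i ∈ S.idx n, ∃ j ∈ S.idx (n + 1),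
    S.ctr n i ∈ S.Q (n + 1) j ∧ x ∈ S.Q n i \ S.Q (n + 1) j}

/-- The `(α n)`-regular set `E = ⋂ n, E_n` determined by the structure. -/
def limitSet (S : RegularStructure X α) : Set X := ⋂ n, S.level n

/-- `⋂_{i=1}^{n-1} E_i`. -/
def preLevel (S : RegularStructure X α) (n : ℕ) : Set X :=
  ⋂ i ∈ Finset.Icc 1 (n - 1), S.level i

/-- `𝔍_{n,j}`: the union of the `(n+1)`-cubes contained in `B(x_{n,j}, r_{n,j}/2)`. -/
def Jset (S : RegularStructure X α) (n j : ℕ) : Set X :=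
  {x | ∃ i ∈ S.idx (n + 1),
    S.Q (n + 1) i ⊆ ball (S.ctr n j) (S.rad n j / 2) ∧ x ∈ S.Q (n + 1) i}

/-- `IN(B(x,r),n)`: the union of the `n`-cubes contained in `B(x,r)`. -/
def INset (S : RegularStructure X α) (x : X) (r : ℝ) (n : ℕ) : Set X :=
  {y | ∃ j ∈ S.idx n, S.Q n j ⊆ ball x r ∧ y ∈ S.Q n j}

/-- `COV(B(x,r),n)`: the union of the `n`-cubes meeting `B(x,r)`. -/
def COVset (S : RegularStructure X α) (x : X) (r : ℝ) (n : ℕ) : Set X :=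
  {y | ∃ j ∈ S.idx n, (S.Q n j ∩ ball x r).Nonempty ∧ y ∈ S.Q n j}

/-- The normalizing constant `A_{n,j} = H(𝔍_{n,j}) / ∫_{𝔍_{n,j}} d(x_{n,j},y)^ρ dH(y)`. -/
noncomputable def Acoef (S : RegularStructure X α) (H : Measure X) (ρ : ℝ) (n j : ℕ) : ℝ :=
  (H (S.Jset n j)).toReal / ∫ y in S.Jset n j, dist (S.ctr n j) y ^ ρ ∂H

/-- The weight `y_n`: equal to `A_{n,j} d(x_{n,j},x)^ρ` on `𝔍_{n,j}` and `1` elsewhere. -/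
noncomputable def weight (S : RegularStructure X α) (H : Measure X) (ρ : ℝ) (n : ℕ)
    (x : X) : ℝ :=
  if h : ∃ j ∈ S.idx n, x ∈ S.Jset n j then
    S.Acoef H ρ n h.choose * dist (S.ctr n h.choose) x ^ ρ
  else 1

/-- The measure `θ_n` with `dθ_n = y_n dH`. -/
noncomputable def theta (S : RegularStructure X α) (H : Measure X) (ρ : ℝ) (n : ℕ) :
    Measure X :=
  H.withDensity fun x => ENNReal.ofReal (S.weight H ρ n x)

/-- The averaged weight `t_n`: on each `(n+1)`-cube `Q`, equal to `θ_n(Q)/H(Q)`. -/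
noncomputable def avgWeight (S : RegularStructure X α) (H : Measure X) (ρ : ℝ) (n : ℕ)
    (x : X) : ℝ :=
  if h : ∃ i ∈ S.idx (n + 1), x ∈ S.Q (n + 1) i then
    (S.theta H ρ n (S.Q (n + 1) h.choose)).toReal / (H (S.Q (n + 1) h.choose)).toReal
  else 1

/-- `K_n = ∏_{i=n₀}^{n} t_i`. -/
noncomputable def Kweight (S : RegularStructure X α) (H : Measure X) (ρ : ℝ)
    (n₀ n : ℕ) (x : X) : ℝ :=
  ∏ i ∈ Finset.Icc n₀ n, S.avgWeight H ρ i x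

/-- The measure `ν_n` with `dν_n = K_n dH`. -/
noncomputable def nu (S : RegularStructure X α) (H : Measure X) (ρ : ℝ) (n₀ n : ℕ) :
    Measure X :=
  H.withDensity fun x => ENNReal.ofReal (S.Kweight H ρ n₀ n x)

/-- A level `n` is good if `B(x_{n,j}, r_{n,j}/16) ⊆ 𝔍_{n,j}` for all `j`, and balls
`B(x,2r)` with `x ∈ Q_{n,j}`, `r ≤ r_{n,j}/(32 C₃(2C₁))` miss all `𝔍_{n,i}`, `i ≠ j`. -/
def GoodLevel (S : RegularStructure X α) (n : ℕ) : Prop :=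
  (∀ j ∈ S.idx n, ball (S.ctr n j) (S.rad n j / 16) ⊆ S.Jset n j) ∧
  (∀ j ∈ S.idx n, ∀ x ∈ S.Q n j, ∀ r : ℝ, 0 < r →
    r ≤ S.rad n j / (32 * S.C₃ (2 * S.C₁)) →
    ∀ i ∈ S.idx n, i ≠ j → ball x (2 * r) ∩ S.Jset n i = ∅)

/-- Relative plumpness of the `(α n)`-regular set determined by the structure. -/
def RelativelyPlump (S : RegularStructure X α) : Prop :=
  ∃ b : ℝ, 0 < b ∧ ∀ x ∈ S.limitSet, ∀ R : ℝ, 0 < R → ∀ n : ℕ,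
    (∃ j ∈ S.idx n, S.Q n j ⊆ ball x R ∩ S.preLevel n) →
    (∀ m, m < n → ¬ ∃ j ∈ S.idx m, S.Q m j ⊆ ball x R ∩ S.preLevel m) →
    ∃ y ∈ S.preLevel n, ball y (b * R) ⊆ ball x R ∩ S.preLevel n

end RegularStructure

/-- `E ⊆ X` is an `(α n)`-regular set. -/
def IsRegularSet {X : Type*} [MetricSpace X] [MeasurableSpace X]
    (α : ℕ → ℝ) (E : Set X) : Prop :=
  ∃ S : RegularStructure X α, E = S.limitSet



section FatAux

set_option linter.unusedSectionVars false

variable {X : Type*} [MetricSpace X] [MeasurableSpace X] [BorelSpace X]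

/-- Real-valued measure of a ball. -/
noncomputable def nuB (μ : Measure X) (x : X) (r : ℝ) : ℝ := (μ (ball x r)).toReal

variable {μ : Measure X} {C : NNReal}

lemma aux_fin (hC : IsDoublingWith μ C) (x : X) (r : ℝ) : μ (ball x r) ≠ ⊤ := by
  rcases le_or_gt r 0 with h | h
  · simp [ball_eq_empty.2 h]
  · have h2 := (hC x r h).2
    have hle : μ (ball x r) ≤ (C : ENNReal) * μ (ball x r) := by
      calc μ (ball x r) ≤ μ (ball x (2 * r)) :=
            measure_mono (ball_subset_ball (by linarith))
        _ ≤ (C : ENNReal) * μ (ball x r) := h2.1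
    exact ne_top_of_le_ne_top h2.2.ne hle

lemma aux_pos (hC : IsDoublingWith μ C) (x : X) (r : ℝ) (hr : 0 < r) :
    0 < μ (ball x r) := by
  have := (hC x (r / 2) (by linarith)).1
  have h2 : 2 * (r / 2) = r := by ring
  rwa [h2] at this

lemma nuB_nonneg (μ : Measure X) (x : X) (r : ℝ) : 0 ≤ nuB μ x r := ENNReal.toReal_nonneg

lemma nuB_pos (hC : IsDoublingWith μ C) (x : X) (r : ℝ) (hr : 0 < r) : 0 < nuB μ x r :=
  ENNReal.toReal_pos (aux_pos hC x r hr).ne' (aux_fin hC x r)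

lemma set_le_nuB (hC : IsDoublingWith μ C) {s : Set X} {y : X} {R : ℝ}
    (h : s ⊆ ball y R) : (μ s).toReal ≤ nuB μ y R :=
  (ENNReal.toReal_le_toReal (ne_top_of_le_ne_top (aux_fin hC y R) (measure_mono h))
    (aux_fin hC y R)).2 (measure_mono h)

lemma nuB_mono (hC : IsDoublingWith μ C) (x : X) {r R : ℝ} (h : r ≤ R) :
    nuB μ x r ≤ nuB μ x R :=
  set_le_nuB hC (ball_subset_ball h)

lemma nuB_db (hC : IsDoublingWith μ C) (x : X) (r : ℝ) :
    nuB μ x (2 * r) ≤ ((C : ℝ) + 1) * nuB μ x r := by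
  rcases le_or_gt r 0 with h | h
  · have h1 : ball x (2 * r) = ∅ := ball_eq_empty.2 (by linarith)
    have h2 : ball x r = ∅ := ball_eq_empty.2 h
    simp [nuB, h1, h2]
  · have h2 := (hC x r h).2
    have := (ENNReal.toReal_le_toReal (aux_fin hC x (2*r)) h2.2.ne).2 h2.1
    rw [ENNReal.toReal_mul, ENNReal.coe_toReal] at this
    calc nuB μ x (2*r) ≤ (C:ℝ) * nuB μ x r := this
      _ ≤ ((C:ℝ)+1) * nuB μ x r := by
          have := nuB_nonneg μ x r; nlinarith

lemma nuB_dbk (hC : IsDoublingWith μ C) (x : X) (r : ℝ) (k : ℕ) :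
    nuB μ x (2 ^ k * r) ≤ ((C : ℝ) + 1) ^ k * nuB μ x r := by
  induction k with
  | zero => simp
  | succ k ih =>
      have h1 : (2:ℝ) ^ (k+1) * r = 2 * (2 ^ k * r) := by ring
      rw [h1]
      calc nuB μ x (2 * (2 ^ k * r)) ≤ ((C:ℝ)+1) * nuB μ x (2 ^ k * r) := nuB_db hC x _
        _ ≤ ((C:ℝ)+1) * (((C:ℝ)+1)^k * nuB μ x r) := by
            have hc : (0:ℝ) ≤ (C:ℝ) + 1 := by positivity
            exact mul_le_mul_of_nonneg_left ih hc
        _ = ((C:ℝ)+1)^(k+1) * nuB μ x r := by ring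

lemma aux_onestep (hC : IsDoublingWith μ C) {D : ℝ} (hD : 1 ≤ D)
    (hUP : ∀ (x : X) (r : ℝ), 0 < r → ((Set.univ : Set X) \ ball x r).Nonempty →
      (ball x r \ ball x (r / D)).Nonempty)
    {k : ℕ} (hk : 6 * D ≤ 2 ^ k) (x : X) {R : ℝ} (hR : 0 < R)
    (hc : ((Set.univ : Set X) \ ball x R).Nonempty) :
    nuB μ x (R / (2 * D)) ≤ (1 - (((C : ℝ) + 1)⁻¹) ^ k) * nuB μ x (2 * R) := by
  have hD0 : 0 < D := by linarith
  obtain ⟨z, hz1, hz2⟩ := hUP x R hR hc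
  set t := R / (2 * D) with ht_def
  have ht : 0 < t := by positivity
  have hdistz : R / D ≤ dist z x := le_of_not_gt (fun h => hz2 (mem_ball.2 h))
  have h2t : R / D = 2 * t := by rw [ht_def]; field_simp
  have hzx : dist z x < R := mem_ball.1 hz1
  have htR : t ≤ R := by
    rw [ht_def, div_le_iff₀ (by positivity)]
    nlinarith
  have hdisj : Disjoint (ball x t) (ball z t) := by
    rw [Set.disjoint_left]
    intro w hw1 hw2
    have h1 : dist w x < t := mem_ball.1 hw1
    have h2 : dist w z < t := mem_ball.1 hw2
    have h3 : dist z x ≤ dist z w + dist w x := dist_triangle _ _ _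
    rw [dist_comm z w] at h3
    rw [h2t] at hdistz
    linarith
  have hsub1 : ball x t ⊆ ball x (2 * R) := ball_subset_ball (by linarith)
  have hsub2 : ball z t ⊆ ball x (2 * R) := by
    intro w hw
    have := mem_ball.1 hw
    have h3 : dist w x ≤ dist w z + dist z x := dist_triangle _ _ _
    exact mem_ball.2 (by linarith)
  have key1 : nuB μ x t + nuB μ z t ≤ nuB μ x (2 * R) := by
    have hm : μ (ball x t) + μ (ball z t) ≤ μ (ball x (2 * R)) := by
      rw [← measure_union hdisj measurableSet_ball]
      exact measure_mono (union_subset hsub1 hsub2)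
    have := (ENNReal.toReal_le_toReal
      (by exact ENNReal.add_ne_top.2 ⟨aux_fin hC _ _, aux_fin hC _ _⟩)
      (aux_fin hC _ _)).2 hm
    rwa [ENNReal.toReal_add (aux_fin hC _ _) (aux_fin hC _ _)] at this
  have key2 : nuB μ x (2 * R) ≤ ((C : ℝ) + 1) ^ k * nuB μ z t := by
    have hsub3 : ball x (2 * R) ⊆ ball z (2 ^ k * t) := by
      intro w hw
      have h1 : dist w x < 2 * R := mem_ball.1 hw
      have h3 : dist w z ≤ dist w x + dist x z := dist_triangle _ _ _
      rw [dist_comm x z] at h3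
      have h4 : 3 * R ≤ 2 ^ k * t := by
        rw [ht_def]
        have : (6 * D) * (R / (2 * D)) ≤ 2 ^ k * (R / (2 * D)) :=
          mul_le_mul_of_nonneg_right hk (by positivity)
        calc 3 * R = (6 * D) * (R / (2 * D)) := by field_simp; ring
          _ ≤ 2 ^ k * (R / (2 * D)) := this
      exact mem_ball.2 (by linarith)
    calc nuB μ x (2 * R) ≤ nuB μ z (2 ^ k * t) := set_le_nuB hC hsub3
      _ ≤ ((C : ℝ) + 1) ^ k * nuB μ z t := nuB_dbk hC z t k
  have hCk : (0:ℝ) < ((C : ℝ) + 1) ^ k := by positivity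
  have key3 : (((C : ℝ) + 1)⁻¹) ^ k * nuB μ x (2 * R) ≤ nuB μ z t := by
    rw [inv_pow]
    have := mul_le_mul_of_nonneg_left key2 (le_of_lt (inv_pos.2 hCk))
    calc (((C:ℝ)+1)^k)⁻¹ * nuB μ x (2*R)
        ≤ (((C:ℝ)+1)^k)⁻¹ * (((C:ℝ)+1)^k * nuB μ z t) := this
      _ = nuB μ z t := by field_simp
  linarith

lemma aux_iter (hC : IsDoublingWith μ C) {D : ℝ} (hD : 1 ≤ D)
    (hUP : ∀ (x : X) (r : ℝ), 0 < r → ((Set.univ : Set X) \ ball x r).Nonempty →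
      (ball x r \ ball x (r / D)).Nonempty)
    {k : ℕ} (hk : 6 * D ≤ 2 ^ k) (x : X) {R : ℝ} (hR : 0 < R)
    (hc : ((Set.univ : Set X) \ ball x R).Nonempty) :
    ∀ (m : ℕ) (r : ℝ), 0 < r → r * (4 * D) ^ m ≤ R →
      nuB μ x r ≤ (1 - (((C : ℝ) + 1)⁻¹) ^ k) ^ m * nuB μ x (2 * R) := by
  have hD0 : 0 < D := by linarith
  have hθ0 : (0:ℝ) ≤ 1 - (((C : ℝ) + 1)⁻¹) ^ k := by
    have h1 : ((C:ℝ)+1)⁻¹ ≤ 1 := by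
      rw [inv_le_one_iff₀]; right
      have : (0:ℝ) ≤ (C:ℝ) := C.2
      linarith
    have h2 : (0:ℝ) ≤ ((C:ℝ)+1)⁻¹ := by positivity
    have := pow_le_one₀ (n := k) h2 h1
    linarith
  intro m
  induction m with
  | zero =>
      intro r hr hle
      simp only [pow_zero, one_mul] at hle ⊢
      exact nuB_mono hC x (by linarith)
  | succ m ih =>
      intro r hr hle
      have hpm : (1:ℝ) ≤ (4 * D) ^ m := one_le_pow₀ (by linarith)
      have he : r * (4 * D) ^ (m + 1) = (r * (4 * D)) * (4 * D) ^ m := by ring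
      rw [he] at hle
      have h2D : r * (2 * D) ≤ R := by
        calc r * (2 * D) ≤ r * (4 * D) := by nlinarith
          _ ≤ (r * (4 * D)) * (4 * D) ^ m := le_mul_of_one_le_right (by positivity) hpm
          _ ≤ R := hle
      have hc' : ((Set.univ : Set X) \ ball x (2 * D * r)).Nonempty := by
        apply hc.mono
        apply diff_subset_diff_right
        exact ball_subset_ball (by nlinarith)
      have step := aux_onestep hC hD hUP hk x (show (0:ℝ) < 2 * D * r by positivity) hc'
      have he1 : 2 * D * r / (2 * D) = r := by field_simp
      rw [he1] at step
      have he2 : 2 * (2 * D * r) = 4 * D * r := by ring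
      rw [he2] at step
      have ih2 := ih (4 * D * r) (by positivity)
        (by linarith [show (4 * D * r) * (4 * D) ^ m = (r * (4 * D)) * (4 * D) ^ m from by ring])
      calc nuB μ x r ≤ (1 - (((C : ℝ) + 1)⁻¹) ^ k) * nuB μ x (4 * D * r) := step
        _ ≤ (1 - (((C : ℝ) + 1)⁻¹) ^ k) *
            ((1 - (((C : ℝ) + 1)⁻¹) ^ k) ^ m * nuB μ x (2 * R)) :=
          mul_le_mul_of_nonneg_left ih2 hθ0
        _ = (1 - (((C : ℝ) + 1)⁻¹) ^ k) ^ (m + 1) * nuB μ x (2 * R) := by ring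

lemma aux_rdq (hC : IsDoublingWith μ C) {D : ℝ} (hD : 1 ≤ D)
    (hUP : ∀ (x : X) (r : ℝ), 0 < r → ((Set.univ : Set X) \ ball x r).Nonempty →
      (ball x r \ ball x (r / D)).Nonempty)
    {k : ℕ} (hk : 6 * D ≤ 2 ^ k) (hk1 : 1 ≤ k) (hC1 : 1 ≤ C) (x : X) {R rr : ℝ}
    (hrr : 0 < rr)
    (hrR : rr ≤ R) (hc : ((Set.univ : Set X) \ ball x R).Nonempty) :
    nuB μ x rr ≤ (1 - (((C : ℝ) + 1)⁻¹) ^ k)⁻¹ *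
      (rr / R) ^ (-Real.log (1 - (((C : ℝ) + 1)⁻¹) ^ k) / Real.log (4 * D)) *
        nuB μ x (2 * R) := by
  have hD0 : 0 < D := by linarith
  have hR : 0 < R := lt_of_lt_of_le hrr hrR
  set θ : ℝ := 1 - (((C : ℝ) + 1)⁻¹) ^ k with hθ_def
  have hCpos : (0:ℝ) < (C:ℝ) + 1 := by
    have : (0:ℝ) ≤ (C:ℝ) := C.2
    linarith
  have hinv1 : ((C:ℝ)+1)⁻¹ ≤ 1 := by
    rw [inv_le_one_iff₀]; right
    have : (0:ℝ) ≤ (C:ℝ) := C.2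
    linarith
  have hinvpos : (0:ℝ) < ((C:ℝ)+1)⁻¹ := by positivity
  have hθ1 : θ < 1 := by
    have : (0:ℝ) < (((C:ℝ)+1)⁻¹) ^ k := by positivity
    rw [hθ_def]; linarith
  have hθ0 : 0 < θ := by
    have hC1R : (1:ℝ) ≤ (C:ℝ) := by exact_mod_cast hC1
    have hlt : ((C:ℝ)+1)⁻¹ < 1 := by
      rw [inv_lt_one_iff₀]; right; linarith
    have h2 : (((C:ℝ)+1)⁻¹) ^ k < 1 :=
      pow_lt_one₀ hinvpos.le hlt (Nat.one_le_iff_ne_zero.1 hk1)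
    rw [hθ_def]; linarith
  have h4D : (1:ℝ) < 4 * D := by linarith
  set ε : ℝ := -Real.log θ / Real.log (4 * D) with hε_def
  set L : ℝ := Real.logb (4 * D) (R / rr) with hL_def
  have hL0 : 0 ≤ L := Real.logb_nonneg h4D ((one_le_div hrr).2 hrR)
  set m : ℕ := ⌊L⌋₊ with hm_def
  have h1 : rr * (4 * D) ^ m ≤ R := by
    have e1 : ((4 * D) : ℝ) ^ m = (4 * D) ^ (m : ℝ) := (Real.rpow_natCast _ m).symm
    have e2 : (4 * D) ^ (m : ℝ) ≤ (4 * D) ^ L :=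
      Real.rpow_le_rpow_of_exponent_le h4D.le (Nat.floor_le hL0)
    have e3 : (4 * D) ^ L = R / rr := Real.rpow_logb (by linarith) (by linarith) (by positivity)
    rw [e1]
    calc rr * (4 * D) ^ (m:ℝ) ≤ rr * (R / rr) := by
          apply mul_le_mul_of_nonneg_left _ hrr.le
          rw [← e3]; exact e2
      _ = R := by field_simp
  have h2 := aux_iter hC hD hUP hk x hR hc m rr hrr h1
  have h3 : θ ^ m ≤ θ⁻¹ * (rr / R) ^ ε := by
    have e1 : (θ:ℝ) ^ m = θ ^ (m : ℝ) := (Real.rpow_natCast _ m).symm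
    have e2 : θ ^ (m:ℝ) ≤ θ ^ (L - 1) := by
      apply Real.rpow_le_rpow_of_exponent_ge hθ0 hθ1.le
      have := Nat.sub_one_lt_floor L
      rw [← hm_def] at this
      linarith
    have e3 : θ ^ (L - 1) = θ⁻¹ * θ ^ L := by
      rw [Real.rpow_sub hθ0, Real.rpow_one]
      ring
    have e4 : θ ^ L = (rr / R) ^ ε := by
      rw [Real.rpow_def_of_pos hθ0, Real.rpow_def_of_pos (by positivity : (0:ℝ) < rr / R)]
      congr 1
      have hlog : Real.log (rr / R) = -Real.log (R / rr) := by
        rw [show rr / R = (R / rr)⁻¹ by field_simp, Real.log_inv]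
      rw [hL_def, hε_def, Real.logb, hlog]
      ring
    rw [e1]
    calc θ ^ (m:ℝ) ≤ θ ^ (L - 1) := e2
      _ = θ⁻¹ * θ ^ L := e3
      _ = θ⁻¹ * (rr / R) ^ ε := by rw [e4]
  calc nuB μ x rr ≤ θ ^ m * nuB μ x (2 * R) := h2
    _ ≤ (θ⁻¹ * (rr / R) ^ ε) * nuB μ x (2 * R) :=
        mul_le_mul_of_nonneg_right h3 (nuB_nonneg μ x _)

end FatAux

set_option maxHeartbeats 1000000

/-- `(α n) ∈ ℓ⁰` implies `E` is fat. -/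
theorem regular_set_fat_of_ell_zero {X : Type*} [MetricSpace X] [MeasurableSpace X]
    [BorelSpace X] [CompleteSpace X]
    (hX : DoublingSpace X) (hup : UniformlyPerfect X)
    (α : ℕ → ℝ) (hα : ∀ n, 0 < α n ∧ α n < 1)
    (E : Set X) (hE : IsRegularSet α E)
    (hsum : ∀ p : ℝ, 0 < p → Summable (fun n => α n ^ p)) :
    ∀ μ : Measure X, IsDoublingMeasure μ → 0 < μ E := by
  classical
  obtain ⟨S, rfl⟩ := hE
  intro μ hμ
  obtain ⟨C, hC1, hC⟩ := hμ
  obtain ⟨⟨a, b, hab⟩, D, hD1, hUP⟩ := hup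
  obtain ⟨k, hk⟩ := pow_unbounded_of_one_lt (R := ℝ) (6 * D) one_lt_two
  have hk' : 6 * D ≤ 2 ^ k := hk.le
  have hk1 : 1 ≤ k := by
    rcases Nat.eq_zero_or_pos k with h | h
    · exfalso; rw [h] at hk; norm_num at hk; linarith
    · exact h
  have hC1R : (1:ℝ) ≤ (C:ℝ) := by exact_mod_cast hC1
  set θ : ℝ := 1 - (((C : ℝ) + 1)⁻¹) ^ k with hθ_def
  have hinvpos : (0:ℝ) < ((C:ℝ)+1)⁻¹ := by positivity
  have hθ1 : θ < 1 := by
    have : (0:ℝ) < (((C:ℝ)+1)⁻¹) ^ k := by positivity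
    rw [hθ_def]; linarith
  have hθ0 : 0 < θ := by
    have hlt : ((C:ℝ)+1)⁻¹ < 1 := by
      rw [inv_lt_one_iff₀]; right; linarith
    have h2 : (((C:ℝ)+1)⁻¹) ^ k < 1 :=
      pow_lt_one₀ hinvpos.le hlt (Nat.one_le_iff_ne_zero.1 hk1)
    rw [hθ_def]; linarith
  have h4D : (1:ℝ) < 4 * D := by linarith
  set ε : ℝ := -Real.log θ / Real.log (4 * D) with hε_def
  have hε : 0 < ε :=
    div_pos (neg_pos.2 (Real.log_neg hθ0 hθ1)) (Real.log_pos h4D)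
  have hdpos := S.d_pos
  have hCC₁ := S.one_le_C₁
  have hCC₂ := S.one_le_C₂
  have hC₁0 : (0:ℝ) < S.C₁ := lt_of_lt_of_le one_pos hCC₁
  have hC₂0 : (0:ℝ) < S.C₂ := lt_of_lt_of_le one_pos hCC₂
  set δ : ℕ → ℝ := fun n => θ⁻¹ * (4 * S.C₁ * S.C₂) ^ ε * α n ^ (S.d * ε) with hδ_def
  have hδ0 : ∀ n, 0 ≤ δ n := fun n => by
    have := Real.rpow_nonneg (hα n).1.le (S.d * ε)
    positivity
  have hδsum : Summable δ := by
    have := (hsum (S.d * ε) (mul_pos hdpos hε)).mul_left (θ⁻¹ * (4 * S.C₁ * S.C₂) ^ ε)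
    simpa [hδ_def, mul_assoc] using this
  -- canonical child containing the center
  have hjc : ∀ n i, ∃ j, j ∈ S.idx (n+1) ∧ S.ctr n i ∈ S.Q (n+1) j := fun n i => by
    obtain ⟨j, hj1, hj2⟩ := S.cover (n+1) (S.ctr n i)
    exact ⟨j, hj1, hj2⟩
  set jc : ℕ → ℕ → ℕ := fun n i => (hjc n i).choose with hjc_def
  have hjmem : ∀ n i, jc n i ∈ S.idx (n+1) := fun n i => (hjc n i).choose_spec.1
  have hjctr : ∀ n i, S.ctr n i ∈ S.Q (n+1) (jc n i) := fun n i => (hjc n i).choose_spec.2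
  -- central chain
  set c : ℕ → ℕ := fun n => Nat.rec ((S.cover 0 a).choose) (fun m cm => jc m cm) n
    with hc_def
  have hcmem : ∀ n, c n ∈ S.idx n := by
    intro n
    induction n with
    | zero => exact (S.cover 0 a).choose_spec.1
    | succ n ih => exact hjmem n (c n)
  have hρstep : ∀ n, S.rad (n+1) (c (n+1)) ≤ S.C₂ * α n ^ S.d * S.rad n (c n) :=
    fun n => S.center_upper n (c n) (hcmem n) (c (n+1)) (hjmem n (c n)) (hjctr n (c n))
  -- eventual smallness of α n ^ d
  have hα0 : Tendsto α atTop (nhds 0) := by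
    have h := (hsum 1 one_pos).tendsto_atTop_zero
    simpa [Real.rpow_one] using h
  set c₀ : ℝ := min (1/(2*S.C₂)) (1/(4*S.C₁*S.C₂)) with hc₀_def
  have hc₀pos : 0 < c₀ := lt_min (by positivity) (by positivity)
  have hthr : 0 < c₀ ^ (1/S.d) := Real.rpow_pos_of_pos hc₀pos _
  have hev : ∀ᶠ n in atTop, α n ^ S.d ≤ c₀ := by
    filter_upwards [hα0.eventually_lt_const hthr] with n hn
    have h1 : α n ^ S.d ≤ (c₀ ^ (1/S.d)) ^ S.d :=
      Real.rpow_le_rpow (hα n).1.le hn.le hdpos.le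
    rwa [← Real.rpow_mul hc₀pos.le, one_div, inv_mul_cancel₀ hdpos.ne', Real.rpow_one] at h1
  obtain ⟨N, hN⟩ := eventually_atTop.1 hev
  have hE1 : ∀ n, N ≤ n → S.C₂ * α n ^ S.d ≤ 1/2 := by
    intro n hn
    have h := (hN n hn).trans (min_le_left _ _)
    calc S.C₂ * α n ^ S.d ≤ S.C₂ * (1/(2*S.C₂)) :=
          mul_le_mul_of_nonneg_left h hC₂0.le
      _ = 1/2 := by field_simp
  have hE2 : ∀ n, N ≤ n → 4*S.C₁*S.C₂ * α n ^ S.d ≤ 1 := by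
    intro n hn
    have h := (hN n hn).trans (min_le_right _ _)
    calc 4*S.C₁*S.C₂ * α n ^ S.d ≤ 4*S.C₁*S.C₂ * (1/(4*S.C₁*S.C₂)) :=
          mul_le_mul_of_nonneg_left h (by positivity)
      _ = 1 := by field_simp
  -- decay of the central chain radii
  have hρdec : ∀ jj : ℕ, S.rad (N + jj) (c (N + jj)) ≤ (1/2)^jj * S.rad N (c N) := by
    intro jj
    induction jj with
    | zero => simp
    | succ jj ih =>
        have s1 := hρstep (N + jj)
        have hrp := (S.rad_pos (N+jj) (c (N+jj)) (hcmem (N+jj))).le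
        have s2 : S.C₂ * α (N+jj) ^ S.d * S.rad (N+jj) (c (N+jj)) ≤
            (1/2) * S.rad (N+jj) (c (N+jj)) :=
          mul_le_mul_of_nonneg_right (hE1 (N+jj) (Nat.le_add_right N jj)) hrp
        have s3 : (1/2:ℝ) * S.rad (N+jj) (c (N+jj)) ≤ (1/2) * ((1/2)^jj * S.rad N (c N)) :=
          mul_le_mul_of_nonneg_left ih (by norm_num)
        calc S.rad (N + (jj+1)) (c (N + (jj+1))) ≤
              S.C₂ * α (N+jj) ^ S.d * S.rad (N+jj) (c (N+jj)) := s1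
          _ ≤ (1/2) * S.rad (N+jj) (c (N+jj)) := s2
          _ ≤ (1/2) * ((1/2)^jj * S.rad N (c N)) := s3
          _ = (1/2)^(jj+1) * S.rad N (c N) := by ring
  set Δ₀ : ℝ := dist a b with hΔ_def
  have hΔ : 0 < Δ₀ := dist_pos.2 hab
  have hradN : 0 < S.rad N (c N) := S.rad_pos N (c N) (hcmem N)
  obtain ⟨j₀, hj₀⟩ := exists_pow_lt_of_lt_one (x := Δ₀ / S.rad N (c N))
    (by positivity) (by norm_num : (1/2:ℝ) < 1)
  set n₁ : ℕ := N + j₀ with hn₁_def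
  have hρsmall : ∀ n, n₁ ≤ n → S.rad n (c n) < Δ₀ := by
    intro n hn
    obtain ⟨t, rfl⟩ := Nat.exists_eq_add_of_le hn
    have h1 := hρdec (j₀ + t)
    have h2 : (1/2:ℝ)^(j₀+t) ≤ (1/2)^j₀ :=
      pow_le_pow_of_le_one (by norm_num) (by norm_num) (Nat.le_add_right _ _)
    have h3 : (1/2:ℝ)^j₀ * S.rad N (c N) < Δ₀ := by
      rw [← lt_div_iff₀ hradN]; exact hj₀
    have h4 : n₁ + t = N + (j₀ + t) := by rw [hn₁_def]; ring
    rw [h4]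
    calc S.rad (N + (j₀+t)) (c (N + (j₀+t))) ≤ (1/2)^(j₀+t) * S.rad N (c N) := h1
      _ ≤ (1/2)^j₀ * S.rad N (c N) := mul_le_mul_of_nonneg_right h2 hradN.le
      _ < Δ₀ := h3
  have hNn₁ : N ≤ n₁ := Nat.le_add_right N j₀
  -- complement of half-balls around cube centers is nonempty for deep levels
  have hNC : ∀ n, n₁ ≤ n → ∀ i, i ∈ S.idx n →
      ((Set.univ : Set X) \ ball (S.ctr n i) (S.rad n i / 2)).Nonempty := by
    intro n hn i hi
    by_contra hcon
    rw [not_nonempty_iff_eq_empty, diff_eq_empty] at hcon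
    have hri := S.rad_pos n i hi
    have hXQ : ∀ w : X, w ∈ S.Q n i := fun w =>
      S.ball_subset n i hi (ball_subset_ball (by linarith) (hcon (mem_univ w)))
    have hceq : c n = i := by
      by_contra hne
      have hdis := S.pairwise_disj n (c n) (hcmem n) i hi hne
      have hmem : S.ctr n (c n) ∈ S.Q n (c n) ∩ S.Q n i :=
        ⟨S.ball_subset n (c n) (hcmem n)
          (mem_ball_self (S.rad_pos n (c n) (hcmem n))), hXQ _⟩
      rw [hdis] at hmem
      exact hmem
    have h1 : dist a b < S.rad n i := by
      have ha := mem_ball.1 (hcon (mem_univ a))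
      have hb := mem_ball.1 (hcon (mem_univ b))
      have := dist_triangle a (S.ctr n i) b
      rw [dist_comm (S.ctr n i) b] at this
      linarith
    have h2 : S.rad n (c n) < Δ₀ := hρsmall n hn
    rw [hceq] at h2
    rw [hΔ_def] at h2
    linarith
  -- the key per-level estimate
  have hkey : ∀ n, n₁ ≤ n → ∀ i, i ∈ S.idx n →
      μ (S.Q (n+1) (jc n i)) ≤ ENNReal.ofReal (δ n) * μ (S.Q n i) := by
    intro n hn i hi
    have hjm : jc n i ∈ S.idx (n+1) := hjmem n i
    have hr : 0 < S.rad n i := S.rad_pos n i hi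
    have hs : 0 < S.rad (n+1) (jc n i) := S.rad_pos (n+1) (jc n i) hjm
    have hsr : S.rad (n+1) (jc n i) ≤ S.C₂ * α n ^ S.d * S.rad n i :=
      S.center_upper n i hi (jc n i) hjm (hjctr n i)
    have hQy : S.Q (n+1) (jc n i) ⊆ ball (S.ctr (n+1) (jc n i)) (S.C₁ * S.rad (n+1) (jc n i)) :=
      S.subset_ball (n+1) (jc n i) hjm
    have hxy : dist (S.ctr n i) (S.ctr (n+1) (jc n i)) < S.C₁ * S.rad (n+1) (jc n i) :=
      mem_ball.1 (hQy (hjctr n i))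
    have hQsub : S.Q (n+1) (jc n i) ⊆ ball (S.ctr n i) (2 * (S.C₁ * S.rad (n+1) (jc n i))) := by
      intro w hw
      have h1 : dist w (S.ctr (n+1) (jc n i)) < S.C₁ * S.rad (n+1) (jc n i) := mem_ball.1 (hQy hw)
      have h2 := dist_triangle w (S.ctr (n+1) (jc n i)) (S.ctr n i)
      rw [dist_comm (S.ctr n i) (S.ctr (n+1) (jc n i))] at hxy
      exact mem_ball.2 (by linarith)
    have hα2 : 4*S.C₁*S.C₂ * α n ^ S.d ≤ 1 := hE2 n (le_trans hNn₁ hn)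
    have hαd0 : 0 < α n ^ S.d := Real.rpow_pos_of_pos (hα n).1 _
    have hmul1 : 2*S.C₁*(S.rad (n+1) (jc n i)) ≤ 2*S.C₁*(S.C₂ * α n ^ S.d * S.rad n i) :=
      mul_le_mul_of_nonneg_left hsr (by positivity)
    have hmul2 : (4*S.C₁*S.C₂ * α n ^ S.d) * S.rad n i ≤ 1 * S.rad n i :=
      mul_le_mul_of_nonneg_right hα2 hr.le
    have hrrR : 2 * (S.C₁ * S.rad (n+1) (jc n i)) ≤ S.rad n i / 2 := by nlinarith
    have hrrpos : (0:ℝ) < 2 * (S.C₁ * S.rad (n+1) (jc n i)) := by positivity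
    have hcomp := hNC n hn i hi
    have hrdq := aux_rdq hC hD1 hUP hk' hk1 hC1 (S.ctr n i) hrrpos hrrR hcomp
    rw [show 2 * (S.rad n i / 2) = S.rad n i by ring] at hrdq
    have hratio : (2 * (S.C₁ * S.rad (n+1) (jc n i))) / (S.rad n i / 2) ≤
        4*S.C₁*S.C₂ * α n ^ S.d := by
      rw [div_le_iff₀ (by positivity)]
      nlinarith
    have hpow : ((2 * (S.C₁ * S.rad (n+1) (jc n i))) / (S.rad n i / 2)) ^ ε ≤
        (4*S.C₁*S.C₂) ^ ε * α n ^ (S.d * ε) := by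
      calc ((2 * (S.C₁ * S.rad (n+1) (jc n i))) / (S.rad n i / 2)) ^ ε
          ≤ (4*S.C₁*S.C₂ * α n ^ S.d) ^ ε :=
            Real.rpow_le_rpow (by positivity) hratio hε.le
        _ = (4*S.C₁*S.C₂) ^ ε * (α n ^ S.d) ^ ε :=
            Real.mul_rpow (by positivity) hαd0.le
        _ = (4*S.C₁*S.C₂) ^ ε * α n ^ (S.d * ε) := by
            rw [← Real.rpow_mul (hα n).1.le]
    have hQfin_i : μ (S.Q n i) ≠ ⊤ :=
      ne_top_of_le_ne_top (aux_fin hC (S.ctr n i) (S.C₁ * S.rad n i))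
        (measure_mono (S.subset_ball n i hi))
    have hJfin : μ (S.Q (n+1) (jc n i)) ≠ ⊤ :=
      ne_top_of_le_ne_top (aux_fin hC (S.ctr (n+1) (jc n i)) (S.C₁ * S.rad (n+1) (jc n i)))
        (measure_mono hQy)
    have hfinal : (μ (S.Q (n+1) (jc n i))).toReal ≤ δ n * (μ (S.Q n i)).toReal := by
      have h1 : (μ (S.Q (n+1) (jc n i))).toReal ≤
          nuB μ (S.ctr n i) (2 * (S.C₁ * S.rad (n+1) (jc n i))) := set_le_nuB hC hQsub
      have h2 : nuB μ (S.ctr n i) (S.rad n i) ≤ (μ (S.Q n i)).toReal :=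
        (ENNReal.toReal_le_toReal (aux_fin hC _ _) hQfin_i).2
          (measure_mono (S.ball_subset n i hi))
      calc (μ (S.Q (n+1) (jc n i))).toReal
          ≤ nuB μ (S.ctr n i) (2 * (S.C₁ * S.rad (n+1) (jc n i))) := h1
        _ ≤ θ⁻¹ * ((2 * (S.C₁ * S.rad (n+1) (jc n i))) / (S.rad n i / 2)) ^ ε *
              nuB μ (S.ctr n i) (S.rad n i) := hrdq
        _ ≤ θ⁻¹ * ((4*S.C₁*S.C₂) ^ ε * α n ^ (S.d * ε)) *
              nuB μ (S.ctr n i) (S.rad n i) := by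
            apply mul_le_mul_of_nonneg_right _ (nuB_nonneg μ _ _)
            exact mul_le_mul_of_nonneg_left hpow (inv_nonneg.2 hθ0.le)
        _ = δ n * nuB μ (S.ctr n i) (S.rad n i) := by
            rw [show δ n = θ⁻¹ * (4*S.C₁*S.C₂) ^ ε * α n ^ (S.d * ε) from rfl, ← mul_assoc]
        _ ≤ δ n * (μ (S.Q n i)).toReal := mul_le_mul_of_nonneg_left h2 (hδ0 n)
    have := ENNReal.ofReal_le_ofReal hfinal
    rwa [ENNReal.ofReal_toReal hJfin, ENNReal.ofReal_mul (hδ0 n),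
      ENNReal.ofReal_toReal hQfin_i] at this
  -- choose the starting level n₀
  have htail := tendsto_sum_nat_add δ
  have htail2 : ∀ᶠ i in atTop, (∑' kk, δ (kk + i)) < 1/2 :=
    htail.eventually_lt_const (by norm_num)
  obtain ⟨N₂, hN₂⟩ := eventually_atTop.1 htail2
  set n₀ : ℕ := max N₂ n₁ with hn₀_def
  have hn₀a : (∑' kk, δ (kk + n₀)) < 1/2 := hN₂ n₀ (le_max_left _ _)
  have hn₀b : n₁ ≤ n₀ := le_max_right _ _
  -- a surviving cube at level n₀
  have hsurv : ∀ n : ℕ, ∃ i, i ∈ S.idx n ∧ ∀ m, m < n → S.Q n i ⊆ S.level m := by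
    intro n
    induction n with
    | zero =>
        obtain ⟨i, hi, _⟩ := S.cover 0 a
        exact ⟨i, hi, fun m hm => absurd hm (Nat.not_lt_zero m)⟩
    | succ n ih =>
        obtain ⟨i, hi, hlev⟩ := ih
        obtain ⟨p, hp1, hp2⟩ := S.center_proper n i hi (jc n i) (hjmem n i) (hjctr n i)
        obtain ⟨kk, hkk, hpk⟩ := S.cover (n+1) p
        have hQsub : S.Q (n+1) kk ⊆ S.Q n i := by
          rcases S.nested (n+1) n (Nat.le_succ n) kk hkk i hi with h | h
          · exfalso
            have hmem : p ∈ S.Q (n+1) kk ∩ S.Q n i := ⟨hpk, hp1⟩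
            rw [h] at hmem
            exact hmem
          · exact h
        have hkj : kk ≠ jc n i := fun he => hp2 (he ▸ hpk)
        have hdisj := S.pairwise_disj (n+1) kk hkk (jc n i) (hjmem n i) hkj
        refine ⟨kk, hkk, fun m hm => ?_⟩
        rcases Nat.lt_succ_iff_lt_or_eq.1 hm with h | h
        · exact fun w hw => hlev m h (hQsub hw)
        · subst h
          intro w hw
          refine ⟨i, hi, jc m i, hjmem m i, hjctr m i, hQsub hw, fun hcontra => ?_⟩
          have hmem : w ∈ S.Q (m+1) kk ∩ S.Q (m+1) (jc m i) := ⟨hw, hcontra⟩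
          rw [hdisj] at hmem
          exact hmem
  obtain ⟨i₀, hi₀, hlev0⟩ := hsurv n₀
  have hQ0pos : 0 < μ (S.Q n₀ i₀) :=
    lt_of_lt_of_le (aux_pos hC (S.ctr n₀ i₀) (S.rad n₀ i₀) (S.rad_pos n₀ i₀ hi₀))
      (measure_mono (S.ball_subset n₀ i₀ hi₀))
  have hQ0fin : μ (S.Q n₀ i₀) ≠ ⊤ :=
    ne_top_of_le_ne_top (aux_fin hC (S.ctr n₀ i₀) (S.C₁ * S.rad n₀ i₀))
      (measure_mono (S.subset_ball n₀ i₀ hi₀))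
  -- level-wise bound inside the surviving cube
  have hlevbound : ∀ n, n₀ ≤ n →
      μ (S.Q n₀ i₀ \ S.level n) ≤ ENNReal.ofReal (δ n) * μ (S.Q n₀ i₀) := by
    intro n hn
    set f : ℕ → Set X := fun i =>
      if i ∈ S.idx n then S.Q n₀ i₀ ∩ S.Q n i ∩ S.Q (n+1) (jc n i) else ∅ with hf_def
    set g : ℕ → Set X := fun i =>
      if i ∈ S.idx n ∧ S.Q n i ⊆ S.Q n₀ i₀ then S.Q n i else ∅ with hg_def
    have hsub : S.Q n₀ i₀ \ S.level n ⊆ ⋃ i, f i := by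
      rintro w ⟨hw0, hwl⟩
      obtain ⟨i, hi, hwi⟩ := S.cover n w
      have hwj : w ∈ S.Q (n+1) (jc n i) := by
        by_contra hnj
        exact hwl ⟨i, hi, jc n i, hjmem n i, hjctr n i, hwi, hnj⟩
      refine mem_iUnion.2 ⟨i, ?_⟩
      rw [show f i = S.Q n₀ i₀ ∩ S.Q n i ∩ S.Q (n+1) (jc n i) from if_pos hi]
      exact ⟨⟨hw0, hwi⟩, hwj⟩
    have hterm : ∀ i, μ (f i) ≤ ENNReal.ofReal (δ n) * μ (g i) := by
      intro i
      by_cases hi : i ∈ S.idx n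
      · by_cases hQs : S.Q n i ⊆ S.Q n₀ i₀
        · rw [show f i = S.Q n₀ i₀ ∩ S.Q n i ∩ S.Q (n+1) (jc n i) from if_pos hi,
            show g i = S.Q n i from if_pos ⟨hi, hQs⟩]
          calc μ (S.Q n₀ i₀ ∩ S.Q n i ∩ S.Q (n+1) (jc n i))
              ≤ μ (S.Q (n+1) (jc n i)) := measure_mono inter_subset_right
            _ ≤ ENNReal.ofReal (δ n) * μ (S.Q n i) := hkey n (le_trans hn₀b hn) i hi
        · have hdis : S.Q n i ∩ S.Q n₀ i₀ = ∅ := by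
            rcases S.nested n n₀ hn i hi i₀ hi₀ with h | h
            · exact h
            · exact absurd h hQs
          have hf0 : μ (f i) = 0 := by
            apply measure_mono_null (t := S.Q n i ∩ S.Q n₀ i₀)
            · rw [show f i = S.Q n₀ i₀ ∩ S.Q n i ∩ S.Q (n+1) (jc n i) from if_pos hi]
              rintro w ⟨⟨hw0, hwi⟩, _⟩
              exact ⟨hwi, hw0⟩
            · rw [hdis]; simp
          rw [hf0]
          exact zero_le
      · rw [show f i = ∅ from if_neg hi]
        simp
    have hgmeas : ∀ i, MeasurableSet (g i) := by
      intro i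
      by_cases h : i ∈ S.idx n ∧ S.Q n i ⊆ S.Q n₀ i₀
      · rw [show g i = S.Q n i from if_pos h]
        exact S.borel n i h.1
      · rw [show g i = ∅ from if_neg h]
        exact MeasurableSet.empty
    have hgdisj : Pairwise (Function.onFun Disjoint g) := by
      intro i j hij
      by_cases hi : i ∈ S.idx n ∧ S.Q n i ⊆ S.Q n₀ i₀
      · by_cases hj : j ∈ S.idx n ∧ S.Q n j ⊆ S.Q n₀ i₀
        · rw [Function.onFun, show g i = S.Q n i from if_pos hi,
            show g j = S.Q n j from if_pos hj]
          exact Set.disjoint_iff_inter_eq_empty.2 (S.pairwise_disj n i hi.1 j hj.1 hij)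
        · rw [Function.onFun, show g j = ∅ from if_neg hj]
          exact disjoint_bot_right
      · rw [Function.onFun, show g i = ∅ from if_neg hi]
        exact disjoint_bot_left
    have hgsub : ⋃ i, g i ⊆ S.Q n₀ i₀ := by
      apply iUnion_subset
      intro i
      by_cases h : i ∈ S.idx n ∧ S.Q n i ⊆ S.Q n₀ i₀
      · rw [show g i = S.Q n i from if_pos h]
        exact h.2
      · rw [show g i = ∅ from if_neg h]
        exact empty_subset _
    calc μ (S.Q n₀ i₀ \ S.level n) ≤ μ (⋃ i, f i) := measure_mono hsub
      _ ≤ ∑' i, μ (f i) := measure_iUnion_le f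
      _ ≤ ∑' i, ENNReal.ofReal (δ n) * μ (g i) := ENNReal.tsum_le_tsum hterm
      _ = ENNReal.ofReal (δ n) * ∑' i, μ (g i) := ENNReal.tsum_mul_left
      _ = ENNReal.ofReal (δ n) * μ (⋃ i, g i) := by rw [measure_iUnion hgdisj hgmeas]
      _ ≤ ENNReal.ofReal (δ n) * μ (S.Q n₀ i₀) := mul_le_mul_right (measure_mono hgsub) _
  -- total bound
  have hcover : S.Q n₀ i₀ \ S.limitSet ⊆ ⋃ kk : ℕ, (S.Q n₀ i₀ \ S.level (kk + n₀)) := by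
    rintro w ⟨hw0, hwl⟩
    simp only [RegularStructure.limitSet, mem_iInter, not_forall] at hwl
    obtain ⟨n, hn⟩ := hwl
    have hnn₀ : n₀ ≤ n := by
      by_contra h
      push_neg at h
      exact hn (hlev0 n h hw0)
    refine mem_iUnion.2 ⟨n - n₀, hw0, ?_⟩
    rw [Nat.sub_add_cancel hnn₀]
    exact hn
  have hsum' : Summable (fun kk => δ (kk + n₀)) := (summable_nat_add_iff n₀).2 hδsum
  have htot : μ (S.Q n₀ i₀ \ S.limitSet) ≤
      ENNReal.ofReal (∑' kk, δ (kk + n₀)) * μ (S.Q n₀ i₀) := by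
    calc μ (S.Q n₀ i₀ \ S.limitSet) ≤ μ (⋃ kk : ℕ, (S.Q n₀ i₀ \ S.level (kk + n₀))) :=
          measure_mono hcover
      _ ≤ ∑' kk : ℕ, μ (S.Q n₀ i₀ \ S.level (kk + n₀)) := measure_iUnion_le _
      _ ≤ ∑' kk : ℕ, ENNReal.ofReal (δ (kk + n₀)) * μ (S.Q n₀ i₀) :=
          ENNReal.tsum_le_tsum (fun kk => hlevbound (kk + n₀) (Nat.le_add_left n₀ kk))
      _ = (∑' kk : ℕ, ENNReal.ofReal (δ (kk + n₀))) * μ (S.Q n₀ i₀) := ENNReal.tsum_mul_right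
      _ = ENNReal.ofReal (∑' kk, δ (kk + n₀)) * μ (S.Q n₀ i₀) := by
          rw [ENNReal.ofReal_tsum_of_nonneg (fun kk => hδ0 _) hsum']
  have hhalf : μ (S.Q n₀ i₀ \ S.limitSet) ≤ ENNReal.ofReal (1/2) * μ (S.Q n₀ i₀) :=
    le_trans htot (mul_le_mul_left (ENNReal.ofReal_le_ofReal hn₀a.le) _)
  have hmain : 0 < μ (S.Q n₀ i₀ ∩ S.limitSet) := by
    rcases eq_zero_or_pos (μ (S.Q n₀ i₀ ∩ S.limitSet)) with h0 | h0
    · exfalso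
      have hle := measure_le_inter_add_diff μ (S.Q n₀ i₀) S.limitSet
      rw [h0, zero_add] at hle
      have hlt : ENNReal.ofReal (1/2) * μ (S.Q n₀ i₀) < 1 * μ (S.Q n₀ i₀) :=
        ENNReal.mul_lt_mul_left hQ0pos.ne' hQ0fin
          (ENNReal.ofReal_lt_one.2 (by norm_num))
      rw [one_mul] at hlt
      exact absurd (le_trans hle hhalf) (not_le.2 hlt)
    · exact h0
  exact lt_of_lt_of_le hmain (measure_mono inter_subset_right)
end

section
/- Let X be a complete, doubling, uniformly perfect metric space and let E ⊆ X be an (α_n)-regular set. If (α_n) ∉ ℓ^∞ (i.e. Σ_n α_n^p = ∞ for every p > 0), then E is thin, i.e. μ(E) = 0 for every doubling measure μ on X. -/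
open MeasureTheory Metric Set Filter

section Helpers

private lemma le_two_pow_nat' {x : ℝ} (hx : 1 ≤ x) : x ≤ 2 ^ ⌈Real.logb 2 x⌉₊ := by
  have hx0 : (0:ℝ) < x := lt_of_lt_of_le one_pos hx
  calc x = (2:ℝ) ^ Real.logb 2 x := (Real.rpow_logb (by norm_num) (by norm_num) hx0).symm
    _ ≤ (2:ℝ) ^ ((⌈Real.logb 2 x⌉₊ : ℝ)) :=
        Real.rpow_le_rpow_of_exponent_le one_le_two (Nat.le_ceil _)
    _ = 2 ^ ⌈Real.logb 2 x⌉₊ := by rw [Real.rpow_natCast]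

private lemma rpow_logb_helper' {cR av d' : ℝ} (hc : 1 ≤ cR) (ha : 0 < av) (_hd : 0 < d') :
    cR ^ (Real.logb 2 ((av⁻¹) ^ (1/d' : ℝ))) = (av⁻¹) ^ (Real.logb 2 cR / d') := by
  have hc0 : (0:ℝ) < cR := lt_of_lt_of_le one_pos hc
  have hainv : (0:ℝ) < av⁻¹ := inv_pos.mpr ha
  rw [Real.logb, Real.log_rpow hainv, Real.rpow_def_of_pos hc0,
    Real.rpow_def_of_pos hainv, Real.logb]
  congr 1
  ring

private lemma prod_one_sub_tendsto_zero' (e : ℕ → ℝ) (h0 : ∀ n, 0 ≤ e n) (h1 : ∀ n, e n ≤ 1)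
    (hns : ¬ Summable e) :
    Tendsto (fun k => ∏ m ∈ Finset.range k, (1 - e m)) atTop (nhds 0) := by
  have hsum : Tendsto (fun k => ∑ m ∈ Finset.range k, e m) atTop atTop :=
    (not_summable_iff_tendsto_nat_atTop_of_nonneg h0).mp hns
  have hupper : ∀ k, ∏ m ∈ Finset.range k, (1 - e m)
      ≤ Real.exp (-(∑ m ∈ Finset.range k, e m)) := by
    intro k
    calc ∏ m ∈ Finset.range k, (1 - e m) ≤ ∏ m ∈ Finset.range k, Real.exp (-(e m)) := by
          apply Finset.prod_le_prod
          · intro m _; linarith [h1 m]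
          · intro m _; linarith [Real.add_one_le_exp (-(e m))]
      _ = Real.exp (-(∑ m ∈ Finset.range k, e m)) := by
          rw [← Real.exp_sum, ← Finset.sum_neg_distrib]
  have hlower : ∀ k, 0 ≤ ∏ m ∈ Finset.range k, (1 - e m) := by
    intro k; apply Finset.prod_nonneg; intro m _; linarith [h1 m]
  have htend : Tendsto (fun k => Real.exp (-(∑ m ∈ Finset.range k, e m))) atTop (nhds 0) :=
    Real.tendsto_exp_atBot.comp (tendsto_neg_atTop_atBot.comp hsum)
  exact tendsto_of_tendsto_of_tendsto_of_le_of_le tendsto_const_nhds htend hlower hupper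

end Helpers

open scoped NNReal ENNReal

/-- `(α n) ∉ ℓ^∞` implies `E` is thin. -/
theorem regular_set_thin_of_not_ell_infty {X : Type*} [MetricSpace X] [MeasurableSpace X]
    [BorelSpace X] [CompleteSpace X]
    (hX : DoublingSpace X) (hup : UniformlyPerfect X)
    (α : ℕ → ℝ) (hα : ∀ n, 0 < α n ∧ α n < 1)
    (E : Set X) (hE : IsRegularSet α E)
    (hsum : ∀ p : ℝ, 0 < p → ¬ Summable (fun n => α n ^ p)) :
    ∀ μ : Measure X, IsDoublingMeasure μ → μ E = 0 := by
  obtain ⟨S, hES⟩ := hE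
  rintro μ ⟨C, hC1, hdbl⟩
  have hCR1 : (1:ℝ) ≤ (C:ℝ) := by exact_mod_cast hC1
  have hcR0 : (0:ℝ) < (C:ℝ) := lt_of_lt_of_le one_pos hCR1
  have hC0ne : (C : ℝ≥0) ≠ 0 := by
    intro h; rw [h] at hC1; exact absurd hC1 (by norm_num)
  have hd0 : (0:ℝ) < S.d := S.d_pos
  -- finiteness of balls
  have hball_fin : ∀ (x : X) (r : ℝ), 0 < r → μ (ball x r) ≠ ⊤ := by
    intro x r hr
    obtain ⟨_, _, h3⟩ := hdbl x r hr
    have hle : μ (ball x r) ≤ (C:ℝ≥0∞) * μ (ball x r) :=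
      le_mul_of_one_le_left zero_le (by exact_mod_cast hC1)
    exact (lt_of_le_of_lt hle h3).ne
  -- iterated doubling
  have hiter : ∀ (k : ℕ) (x : X) (r : ℝ), 0 < r →
      μ (ball x (2^k * r)) ≤ (C:ℝ≥0∞)^k * μ (ball x r) := by
    intro k
    induction k with
    | zero => intro x r _; simp
    | succ k ih =>
      intro x r hr
      have h2k : (0:ℝ) < 2^k * r := by positivity
      calc μ (ball x (2^(k+1) * r)) = μ (ball x (2 * (2^k * r))) := by
            rw [show (2:ℝ)^(k+1) * r = 2 * (2^k * r) by ring]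
        _ ≤ (C:ℝ≥0∞) * μ (ball x (2^k * r)) := (hdbl x (2^k * r) h2k).2.1
        _ ≤ (C:ℝ≥0∞) * ((C:ℝ≥0∞)^k * μ (ball x r)) := mul_le_mul_right (ih x r hr) _
        _ = (C:ℝ≥0∞)^(k+1) * μ (ball x r) := by ring
  -- cubes have finite measure
  have hQfin : ∀ n i, i ∈ S.idx n → μ (S.Q n i) ≠ ⊤ := by
    intro n i hi
    have hr : 0 < S.C₁ * S.rad n i :=
      mul_pos (lt_of_lt_of_le one_pos S.one_le_C₁) (S.rad_pos n i hi)
    exact ne_top_of_le_ne_top (hball_fin _ _ hr) (measure_mono (S.subset_ball n i hi))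
  -- constants
  set u : ℕ → ℝ := fun n => (α n)⁻¹ ^ (1/S.d : ℝ) with hu_def
  have hu1 : ∀ n, (1:ℝ) ≤ u n := by
    intro n
    apply Real.one_le_rpow
    · rw [le_inv_comm₀ one_pos (hα n).1]; simpa using (hα n).2.le
    · positivity
  set M : ℝ := S.C₁ * (S.C₂ + 1) with hM_def
  have hM1 : (1:ℝ) ≤ M := by
    have h1 := S.one_le_C₁; have h2 := S.one_le_C₂; nlinarith
  set a : ℕ := ⌈Real.logb 2 M⌉₊ with ha_def
  set b : ℕ → ℕ := fun n => ⌈Real.logb 2 (u n)⌉₊ with hb_def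
  set K : ℕ → ℕ := fun n => a + b n with hK_def
  set en : ℕ → ℝ≥0 := fun n => C⁻¹ ^ (K n) with hen_def
  -- Lemma A
  have lemA : ∀ n i j, i ∈ S.idx n → j ∈ S.idx (n+1) → S.ctr n i ∈ S.Q (n+1) j →
      μ (S.Q n i \ S.Q (n+1) j) ≤ (1 - (en n : ℝ≥0∞)) * μ (S.Q n i) := by
    intro n i j hi hj hcj
    have hr' : 0 < S.rad (n+1) j := S.rad_pos _ _ hj
    have hrad : 0 < S.rad n i := S.rad_pos _ _ hi
    have hsub : S.Q (n+1) j ⊆ S.Q n i := by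
      rcases S.nested (n+1) n (Nat.le_succ n) j hj i hi with h | h
      · exfalso
        have hctr : S.ctr n i ∈ S.Q n i := S.ball_subset n i hi (mem_ball_self hrad)
        have hmem : S.ctr n i ∈ S.Q (n+1) j ∩ S.Q n i := ⟨hcj, hctr⟩
        rw [h] at hmem; exact hmem
      · exact h
    have hAu : u n * α n ^ (1/S.d : ℝ) = 1 := by
      rw [hu_def]
      rw [← Real.mul_rpow (inv_nonneg.mpr (hα n).1.le) (hα n).1.le,
        inv_mul_cancel₀ (hα n).1.ne', Real.one_rpow]
    have hcl := S.center_lower n i hi j hj hcj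
    have hC₂ : (1:ℝ) ≤ S.C₂ := S.one_le_C₂
    have hC₁ : (1:ℝ) ≤ S.C₁ := S.one_le_C₁
    have hrle : S.rad n i ≤ S.C₂ * u n * S.rad (n+1) j := by
      have hid : S.C₂ * u n * (1 / S.C₂ * α n ^ (1/S.d : ℝ) * S.rad n i) = S.rad n i := by
        have hcc : S.C₂ * (1/S.C₂) = 1 := mul_one_div_cancel (by linarith)
        calc S.C₂ * u n * (1 / S.C₂ * α n ^ (1/S.d : ℝ) * S.rad n i)
            = (S.C₂ * (1/S.C₂)) * ((u n * α n ^ (1/S.d : ℝ)) * S.rad n i) := by ring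
          _ = S.rad n i := by rw [hcc, hAu]; ring
      calc S.rad n i = S.C₂ * u n * (1/S.C₂ * α n ^ (1/S.d : ℝ) * S.rad n i) := hid.symm
        _ ≤ S.C₂ * u n * S.rad (n+1) j := by
            apply mul_le_mul_of_nonneg_left hcl
            have := hu1 n; nlinarith
    have hG : S.Q n i ⊆ ball (S.ctr (n+1) j) ((2:ℝ)^(K n) * S.rad (n+1) j) := by
      intro y hy
      have hy1 : dist y (S.ctr n i) < S.C₁ * S.rad n i := mem_ball.mp (S.subset_ball n i hi hy)
      have hy2 : dist (S.ctr n i) (S.ctr (n+1) j) < S.C₁ * S.rad (n+1) j :=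
        mem_ball.mp (S.subset_ball (n+1) j hj hcj)
      have htri : dist y (S.ctr (n+1) j)
          ≤ dist y (S.ctr n i) + dist (S.ctr n i) (S.ctr (n+1) j) := dist_triangle _ _ _
      rw [mem_ball]
      have h2a : M ≤ 2^a := le_two_pow_nat' hM1
      have h2b : u n ≤ 2^(b n) := le_two_pow_nat' (hu1 n)
      have hKeq : ((2:ℝ))^(K n) = 2^a * 2^(b n) := pow_add 2 a (b n)
      have h5 : M * u n ≤ 2^a * 2^(b n) :=
        mul_le_mul h2a h2b (by linarith [hu1 n]) (by positivity)
      have h6 : M * u n * S.rad (n+1) j ≤ 2^a * 2^(b n) * S.rad (n+1) j :=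
        mul_le_mul_of_nonneg_right h5 hr'.le
      have h7 : S.C₁ * S.rad n i ≤ S.C₁ * (S.C₂ * u n * S.rad (n+1) j) :=
        mul_le_mul_of_nonneg_left hrle (by linarith)
      have h8 : S.C₁ * S.rad (n+1) j ≤ S.C₁ * (u n * S.rad (n+1) j) := by
        nlinarith [mul_nonneg (mul_nonneg (by linarith : (0:ℝ) ≤ S.C₁) hr'.le)
          (by linarith [hu1 n] : (0:ℝ) ≤ u n - 1)]
      have h9 : S.C₁ * (S.C₂ * u n * S.rad (n+1) j) + S.C₁ * (u n * S.rad (n+1) j)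
          = M * u n * S.rad (n+1) j := by rw [hM_def]; ring
      rw [hKeq]
      linarith
    have hchain : μ (S.Q n i) ≤ (C:ℝ≥0∞)^(K n) * μ (S.Q (n+1) j) := by
      calc μ (S.Q n i) ≤ μ (ball (S.ctr (n+1) j) ((2:ℝ)^(K n) * S.rad (n+1) j)) :=
            measure_mono hG
        _ ≤ (C:ℝ≥0∞)^(K n) * μ (ball (S.ctr (n+1) j) (S.rad (n+1) j)) := hiter (K n) _ _ hr'
        _ ≤ _ := mul_le_mul_right (measure_mono (S.ball_subset (n+1) j hj)) _
    have hge : (en n : ℝ≥0∞) * μ (S.Q n i) ≤ μ (S.Q (n+1) j) := by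
      have hone : (en n : ℝ≥0∞) * (C:ℝ≥0∞)^(K n) = 1 := by
        rw [hen_def]
        rw [← ENNReal.coe_pow, ← ENNReal.coe_mul]
        norm_cast
        rw [← mul_pow, inv_mul_cancel₀ hC0ne, one_pow]
      calc (en n : ℝ≥0∞) * μ (S.Q n i)
          ≤ (en n : ℝ≥0∞) * ((C:ℝ≥0∞)^(K n) * μ (S.Q (n+1) j)) := mul_le_mul_right hchain _
        _ = μ (S.Q (n+1) j) := by rw [← mul_assoc, hone, one_mul]
    have hdiffeq : μ (S.Q n i \ S.Q (n+1) j) = μ (S.Q n i) - μ (S.Q (n+1) j) :=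
      measure_diff hsub (S.borel (n+1) j hj).nullMeasurableSet (hQfin (n+1) j hj)
    rw [hdiffeq]
    have hsm : (1 - (en n : ℝ≥0∞)) * μ (S.Q n i)
        = μ (S.Q n i) - (en n : ℝ≥0∞) * μ (S.Q n i) := by
      rw [ENNReal.sub_mul (fun _ _ => hQfin n i hi), one_mul]
    rw [hsm]
    exact tsub_le_tsub_left hge _
  -- structure of E in cubes
  have hlevel : ∀ n, E ⊆ S.level n := by
    intro n; rw [hES]; exact Set.iInter_subset _ n
  have hkey : ∀ n i j, i ∈ S.idx n → j ∈ S.idx (n+1) → S.ctr n i ∈ S.Q (n+1) j →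
      ∀ x, x ∈ E → x ∈ S.Q n i → x ∉ S.Q (n+1) j := by
    intro n i j hi hj hcj x hxE hxQ
    have hx := hlevel n hxE
    simp only [RegularStructure.level, Set.mem_setOf_eq] at hx
    obtain ⟨i₀, hi₀, j₀, hj₀, hcj₀, hx₀⟩ := hx
    have hii : i₀ = i := by
      by_contra hne
      have h := S.pairwise_disj n i₀ hi₀ i hi hne
      have hmem : x ∈ S.Q n i₀ ∩ S.Q n i := ⟨hx₀.1, hxQ⟩
      rw [h] at hmem; exact hmem
    subst hii
    have hjj : j₀ = j := by
      by_contra hne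
      have h := S.pairwise_disj (n+1) j₀ hj₀ j hj hne
      have hmem : S.ctr n i₀ ∈ S.Q (n+1) j₀ ∩ S.Q (n+1) j := ⟨hcj₀, hcj⟩
      rw [h] at hmem; exact hmem
    subst hjj
    exact hx₀.2
  -- main induction
  have main : ∀ (k n : ℕ), ∀ i ∈ S.idx n,
      μ (E ∩ S.Q n i) ≤ (∏ m ∈ Finset.Ico n (n+k), (1 - (en m : ℝ≥0∞))) * μ (S.Q n i) := by
    intro k
    induction k with
    | zero =>
      intro n i _
      simp only [Nat.add_zero, Finset.Ico_self, Finset.prod_empty, one_mul]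
      exact measure_mono inter_subset_right
    | succ k ih =>
      intro n i hi
      obtain ⟨j, hj, hcj⟩ := S.cover (n+1) (S.ctr n i)
      set T : Set ℕ := {i' | i' ∈ S.idx (n+1) ∧ i' ≠ j ∧ S.Q (n+1) i' ⊆ S.Q n i} with hT
      have hTcount : T.Countable := Set.to_countable T
      have hTmem : ∀ i' ∈ T, i' ∈ S.idx (n+1) ∧ i' ≠ j ∧ S.Q (n+1) i' ⊆ S.Q n i := by
        intro i' hi'; exact hi'
      have hstep : E ∩ S.Q n i ⊆ ⋃ i' ∈ T, (E ∩ S.Q (n+1) i') := by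
        rintro x ⟨hxE, hxQ⟩
        obtain ⟨i', hi', hxi'⟩ := S.cover (n+1) x
        have hnotj : x ∉ S.Q (n+1) j := hkey n i j hi hj hcj x hxE hxQ
        have hne : i' ≠ j := fun h => hnotj (h ▸ hxi')
        have hsub' : S.Q (n+1) i' ⊆ S.Q n i := by
          rcases S.nested (n+1) n (Nat.le_succ n) i' hi' i hi with h | h
          · exfalso
            have hmem : x ∈ S.Q (n+1) i' ∩ S.Q n i := ⟨hxi', hxQ⟩
            rw [h] at hmem; exact hmem
          · exact h
        exact Set.mem_biUnion (show i' ∈ T from ⟨hi', hne, hsub'⟩) ⟨hxE, hxi'⟩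
      have hTdisj : (⋃ i' ∈ T, S.Q (n+1) i') ⊆ S.Q n i \ S.Q (n+1) j := by
        intro x hx
        obtain ⟨i', hi'T, hxi'⟩ := Set.mem_iUnion₂.mp hx
        obtain ⟨hidx', hne', hsub'⟩ := hTmem i' hi'T
        refine ⟨hsub' hxi', ?_⟩
        intro hxj
        have h := S.pairwise_disj (n+1) i' hidx' j hj hne'
        have hmem : x ∈ S.Q (n+1) i' ∩ S.Q (n+1) j := ⟨hxi', hxj⟩
        rw [h] at hmem; exact hmem
      have hpwd : T.PairwiseDisjoint (fun i' => S.Q (n+1) i') := by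
        intro x hx y hy hxy
        have h := S.pairwise_disj (n+1) x (hTmem x hx).1 y (hTmem y hy).1 hxy
        exact Set.disjoint_iff_inter_eq_empty.mpr h
      have hbu : μ (⋃ i' ∈ T, S.Q (n+1) i') = ∑' i' : T, μ (S.Q (n+1) (i' : ℕ)) :=
        measure_biUnion hTcount hpwd (fun i' hi' => S.borel (n+1) i' (hTmem i' hi').1)
      have hP : (∏ m ∈ Finset.Ico n (n+(k+1)), (1 - (en m : ℝ≥0∞)))
          = (1 - (en n : ℝ≥0∞)) * ∏ m ∈ Finset.Ico (n+1) (n+1+k), (1 - (en m : ℝ≥0∞)) := by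
        rw [show n+1+k = n+(k+1) from by omega]
        exact Finset.prod_eq_prod_Ico_succ_bot (by omega) _
      calc μ (E ∩ S.Q n i) ≤ ∑' i' : T, μ (E ∩ S.Q (n+1) (i' : ℕ)) :=
            le_trans (measure_mono hstep) (measure_biUnion_le μ hTcount _)
        _ ≤ ∑' i' : T, (∏ m ∈ Finset.Ico (n+1) (n+1+k), (1 - (en m : ℝ≥0∞)))
              * μ (S.Q (n+1) (i' : ℕ)) :=
            ENNReal.tsum_le_tsum (fun i' => ih (n+1) (i' : ℕ) (hTmem _ i'.2).1)
        _ = (∏ m ∈ Finset.Ico (n+1) (n+1+k), (1 - (en m : ℝ≥0∞)))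
              * ∑' i' : T, μ (S.Q (n+1) (i' : ℕ)) := ENNReal.tsum_mul_left
        _ = (∏ m ∈ Finset.Ico (n+1) (n+1+k), (1 - (en m : ℝ≥0∞)))
              * μ (⋃ i' ∈ T, S.Q (n+1) i') := by rw [hbu]
        _ ≤ (∏ m ∈ Finset.Ico (n+1) (n+1+k), (1 - (en m : ℝ≥0∞)))
              * μ (S.Q n i \ S.Q (n+1) j) := mul_le_mul_right (measure_mono hTdisj) _
        _ ≤ (∏ m ∈ Finset.Ico (n+1) (n+1+k), (1 - (en m : ℝ≥0∞)))
              * ((1 - (en n : ℝ≥0∞)) * μ (S.Q n i)) :=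
            mul_le_mul_right (lemA n i j hi hj hcj) _
        _ = (∏ m ∈ Finset.Ico n (n+(k+1)), (1 - (en m : ℝ≥0∞))) * μ (S.Q n i) := by
            rw [hP]; ring
  -- summability facts
  set eR : ℕ → ℝ := fun n => ((C:ℝ)⁻¹) ^ (K n) with heR_def
  have hene : ∀ n, ((en n : ℝ≥0) : ℝ) = eR n := by
    intro n; rw [hen_def, heR_def]; push_cast; ring
  have heR0 : ∀ n, 0 ≤ eR n := fun n => by rw [heR_def]; positivity
  have heR1 : ∀ n, eR n ≤ 1 := by
    intro n; rw [heR_def]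
    exact pow_le_one₀ (by positivity) (inv_le_one_of_one_le₀ hCR1)
  have hen1 : ∀ n, en n ≤ 1 := by
    intro n
    rw [← NNReal.coe_le_coe]
    rw [hene n]; simpa using heR1 n
  set p₀ : ℝ := Real.logb 2 (C:ℝ) / S.d with hp₀_def
  have hp₀ : 0 ≤ p₀ := div_nonneg (Real.logb_nonneg one_lt_two hCR1) hd0.le
  set p : ℝ := p₀ + 1 with hp_def
  have hp : 0 < p := by rw [hp_def]; linarith
  have hclaim : ∀ n, ((C:ℝ)^(a+1))⁻¹ * α n ^ p ≤ eR n := by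
    intro n
    have hbK : (C:ℝ) ^ (b n) ≤ (C:ℝ) * α n ^ (-p) := by
      have h1 : ((b n : ℕ) : ℝ) ≤ Real.logb 2 (u n) + 1 := by
        rw [hb_def]
        exact le_of_lt (Nat.ceil_lt_add_one (Real.logb_nonneg one_lt_two (hu1 n)))
      have h3 : (C:ℝ) ^ ((b n : ℕ) : ℝ) ≤ (C:ℝ) ^ (Real.logb 2 (u n) + 1) :=
        Real.rpow_le_rpow_of_exponent_le hCR1 h1
      have h4 : (C:ℝ) ^ (Real.logb 2 (u n) + 1) = (C:ℝ) ^ (Real.logb 2 (u n)) * (C:ℝ) := by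
        rw [Real.rpow_add hcR0, Real.rpow_one]
      have h5 : (C:ℝ) ^ (Real.logb 2 (u n)) = ((α n)⁻¹) ^ (p₀ : ℝ) := by
        rw [hu_def, hp₀_def]
        exact rpow_logb_helper' hCR1 (hα n).1 hd0
      have h6 : ((α n)⁻¹) ^ (p₀ : ℝ) = α n ^ (-p₀ : ℝ) := by
        rw [Real.inv_rpow (hα n).1.le, ← Real.rpow_neg (hα n).1.le]
      have h7 : α n ^ (-p₀ : ℝ) ≤ α n ^ (-p : ℝ) :=
        Real.rpow_le_rpow_of_exponent_ge (hα n).1 (hα n).2.le (by rw [hp_def]; linarith)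
      calc (C:ℝ) ^ (b n) = (C:ℝ) ^ ((b n : ℕ) : ℝ) := (Real.rpow_natCast _ _).symm
        _ ≤ (C:ℝ) ^ (Real.logb 2 (u n) + 1) := h3
        _ = (C:ℝ) * α n ^ (-p₀ : ℝ) := by rw [h4, h5, h6]; ring
        _ ≤ (C:ℝ) * α n ^ (-p : ℝ) := mul_le_mul_of_nonneg_left h7 hcR0.le
    have hcK : (C:ℝ) ^ (K n) ≤ (C:ℝ)^(a+1) * α n ^ (-p : ℝ) := by
      calc (C:ℝ) ^ (K n) = (C:ℝ)^a * (C:ℝ)^(b n) := by rw [hK_def]; exact pow_add _ _ _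
        _ ≤ (C:ℝ)^a * ((C:ℝ) * α n ^ (-p : ℝ)) := mul_le_mul_of_nonneg_left hbK (by positivity)
        _ = (C:ℝ)^(a+1) * α n ^ (-p : ℝ) := by rw [pow_succ]; ring
    have hpos1 : (0:ℝ) < (C:ℝ) ^ (K n) := by positivity
    have hfin : ((C:ℝ)^(a+1) * α n ^ (-p : ℝ))⁻¹ = ((C:ℝ)^(a+1))⁻¹ * α n ^ p := by
      rw [mul_inv, ← Real.rpow_neg (hα n).1.le, neg_neg]
    calc ((C:ℝ)^(a+1))⁻¹ * α n ^ p = ((C:ℝ)^(a+1) * α n ^ (-p : ℝ))⁻¹ := hfin.symm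
      _ ≤ ((C:ℝ) ^ (K n))⁻¹ := inv_anti₀ hpos1 hcK
      _ = eR n := by rw [heR_def, ← inv_pow]
  have hnotsum : ¬ Summable eR := by
    intro hsm
    apply hsum p hp
    have hc0 : ((C:ℝ)^(a+1)) ≠ 0 := pow_ne_zero _ hcR0.ne'
    have h1 : Summable (fun n => ((C:ℝ)^(a+1))⁻¹ * α n ^ p) :=
      Summable.of_nonneg_of_le (fun n => mul_nonneg (by positivity) (Real.rpow_nonneg (hα n).1.le p)) hclaim hsm
    have h2 := h1.mul_left ((C:ℝ)^(a+1))
    have h3 : (fun n => (C:ℝ)^(a+1) * (((C:ℝ)^(a+1))⁻¹ * α n ^ p)) = fun n => α n ^ p := by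
      funext n; rw [← mul_assoc, mul_inv_cancel₀ hc0, one_mul]
    rwa [h3] at h2
  -- each 0-cube contributes measure zero
  have hzero : ∀ i ∈ S.idx 0, μ (E ∩ S.Q 0 i) = 0 := by
    intro i hi
    have hQf : μ (S.Q 0 i) ≠ ⊤ := hQfin 0 i hi
    have hle : ∀ k, μ (E ∩ S.Q 0 i)
        ≤ (∏ m ∈ Finset.range k, (1 - (en m : ℝ≥0∞))) * μ (S.Q 0 i) := by
      intro k
      have h := main k 0 i hi
      rwa [show (0:ℕ)+k = k from by omega, ← Finset.range_eq_Ico] at h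
    have hcoeprod : ∀ k, ((∏ m ∈ Finset.range k, (1 - en m) : ℝ≥0) : ℝ)
        = ∏ m ∈ Finset.range k, (1 - ((en m : ℝ≥0) : ℝ)) := by
      intro k
      rw [NNReal.coe_prod]
      exact Finset.prod_congr rfl fun m _ => by rw [NNReal.coe_sub (hen1 m), NNReal.coe_one]
    have hreal : Tendsto (fun k => ∏ m ∈ Finset.range k, (1 - ((en m : ℝ≥0) : ℝ)))
        atTop (nhds 0) := by
      apply prod_one_sub_tendsto_zero'
      · intro n; positivity
      · intro n; rw [hene n]; exact heR1 n
      · intro hsm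
        apply hnotsum
        have : (fun n => ((en n : ℝ≥0) : ℝ)) = eR := funext hene
        rwa [this] at hsm
    have hnn : Tendsto (fun k => (∏ m ∈ Finset.range k, (1 - en m) : ℝ≥0))
        atTop (nhds 0) := by
      rw [← NNReal.tendsto_coe]
      simp only [hcoeprod, NNReal.coe_zero]
      exact hreal
    have hcoe : ∀ k, (∏ m ∈ Finset.range k, (1 - (en m : ℝ≥0∞)))
        = ((∏ m ∈ Finset.range k, (1 - en m) : ℝ≥0) : ℝ≥0∞) := by
      intro k
      rw [ENNReal.coe_finset_prod]
      exact Finset.prod_congr rfl fun m _ => by rw [ENNReal.coe_sub, ENNReal.coe_one]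
    have henn : Tendsto (fun k => (∏ m ∈ Finset.range k, (1 - (en m : ℝ≥0∞))) * μ (S.Q 0 i))
        atTop (nhds 0) := by
      have h2 : Tendsto (fun k => ((∏ m ∈ Finset.range k, (1 - en m) : ℝ≥0) : ℝ≥0∞))
          atTop (nhds 0) := by
        rw [← ENNReal.coe_zero]; exact ENNReal.tendsto_coe.mpr hnn
      have h3 := ENNReal.Tendsto.mul_const h2 (Or.inr hQf)
      simp only [zero_mul] at h3
      simp only [hcoe]
      exact h3
    exact le_antisymm (ge_of_tendsto' henn hle) zero_le
  -- conclude
  refine le_antisymm ?_ zero_le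
  have hcover0 : E ⊆ ⋃ i ∈ S.idx 0, (E ∩ S.Q 0 i) := by
    intro x hx
    obtain ⟨i, hi, hxi⟩ := S.cover 0 x
    exact Set.mem_biUnion hi ⟨hx, hxi⟩
  calc μ E ≤ ∑' i : S.idx 0, μ (E ∩ S.Q 0 (i : ℕ)) :=
        le_trans (measure_mono hcover0)
          (measure_biUnion_le μ (Set.to_countable (S.idx 0)) _)
    _ = 0 := by
        rw [ENNReal.tsum_eq_zero]
        exact fun i => hzero (i : ℕ) i.2
end

section
/- If X is a uniformly perfect metric space, E ⊆ X is an (α_n)-regular set, and f : X → Y is an η-quasisymmetric homeomorphism onto a metric space Y, then the image f(E) is an (α_n)-regular subset of Y (with possibly different constants d, C₁, C₂, C₃(·)). -/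
open MeasureTheory Metric Set Filter

section AuxLemmas
open Metric Set


section QSAux
variable {X Y : Type*} [MetricSpace X] [MetricSpace Y]
variable (f : X ≃ₜ Y) (η : ℝ → ℝ)

theorem eta_zero (hη_mono : StrictMonoOn η (Set.Ici 0))
    (hη_maps : Set.MapsTo η (Set.Ici 0) (Set.Ici 0))
    (hη_surj : Set.SurjOn η (Set.Ici 0) (Set.Ici 0)) : η 0 = 0 := by
  obtain ⟨t, ht, h⟩ := hη_surj Set.self_mem_Ici
  rcases eq_or_lt_of_le (Set.mem_Ici.1 ht) with h0 | h0
  · rw [← h0] at h; exact h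
  · exfalso
    have := hη_mono Set.self_mem_Ici (Set.mem_Ici.2 h0.le) h0
    rw [h] at this
    exact absurd this (not_lt.2 (Set.mem_Ici.1 (hη_maps Set.self_mem_Ici)))

theorem eta_pos (hη_mono : StrictMonoOn η (Set.Ici 0))
    (hη_maps : Set.MapsTo η (Set.Ici 0) (Set.Ici 0))
    (hη_surj : Set.SurjOn η (Set.Ici 0) (Set.Ici 0)) {s : ℝ} (hs : 0 < s) : 0 < η s := by
  have h0 := eta_zero η hη_mono hη_maps hη_surj
  have := hη_mono Set.self_mem_Ici (Set.mem_Ici.2 hs.le) hs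
  rwa [h0] at this

/-- main workhorse: `d(x,y) ≤ s d(x,z)` implies `d(fx,fy) ≤ (η s + 1) d(fx,fz)`. -/
theorem qsA (hη_mono : StrictMonoOn η (Set.Ici 0))
    (hη_maps : Set.MapsTo η (Set.Ici 0) (Set.Ici 0))
    (hqs : ∀ x y z : X, x ≠ y → x ≠ z → y ≠ z →
      dist (f x) (f y) / dist (f x) (f z) ≤ η (dist x y / dist x z))
    {x y z : X} (hxz : x ≠ z) {s : ℝ} (hs : 0 ≤ s)
    (h : dist x y ≤ s * dist x z) :
    dist (f x) (f y) ≤ (η s + 1) * dist (f x) (f z) := by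
  have hfxz : (0:ℝ) < dist (f x) (f z) :=
    dist_pos.2 (fun e => hxz (f.injective e))
  have hηs : 0 ≤ η s := Set.mem_Ici.1 (hη_maps (Set.mem_Ici.2 hs))
  rcases eq_or_ne x y with rfl | hxy
  · simpa using mul_nonneg (by linarith) hfxz.le
  rcases eq_or_ne y z with rfl | hyz
  · nlinarith [dist_nonneg (x := f x) (y := f y)]
  have hxz' : (0:ℝ) < dist x z := dist_pos.2 hxz
  have h1 := hqs x y z hxy hxz hyz
  have h2 : η (dist x y / dist x z) ≤ η s := by
    rcases eq_or_lt_of_le (show dist x y / dist x z ≤ s from (div_le_iff₀ hxz').2 h) with e | e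
    · rw [e]
    · exact le_of_lt (hη_mono (Set.mem_Ici.2 (div_nonneg dist_nonneg hxz'.le)) (Set.mem_Ici.2 hs) e)
  have := (div_le_iff₀ hfxz).1 (le_trans h1 h2)
  nlinarith

/-- strict version, all distinct. -/
theorem qsS (hη_mono : StrictMonoOn η (Set.Ici 0))
    (hqs : ∀ x y z : X, x ≠ y → x ≠ z → y ≠ z →
      dist (f x) (f y) / dist (f x) (f z) ≤ η (dist x y / dist x z))
    {x y z : X} (hxy : x ≠ y) (hxz : x ≠ z) (hyz : y ≠ z) {s : ℝ} (hs : 0 ≤ s)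
    (h : dist x y ≤ s * dist x z) :
    dist (f x) (f y) ≤ η s * dist (f x) (f z) := by
  have hfxz : (0:ℝ) < dist (f x) (f z) :=
    dist_pos.2 (fun e => hxz (f.injective e))
  have hxz' : (0:ℝ) < dist x z := dist_pos.2 hxz
  have h1 := hqs x y z hxy hxz hyz
  have h2 : η (dist x y / dist x z) ≤ η s := by
    rcases eq_or_lt_of_le (show dist x y / dist x z ≤ s from (div_le_iff₀ hxz').2 h) with e | e
    · rw [e]
    · exact le_of_lt (hη_mono (Set.mem_Ici.2 (div_nonneg dist_nonneg hxz'.le)) (Set.mem_Ici.2 hs) e)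
  have := (div_le_iff₀ hfxz).1 (le_trans h1 h2)
  linarith

end QSAux

section Chain
variable {X Y : Type*} [MetricSpace X] [MetricSpace Y]
variable (f : X ≃ₜ Y) (η : ℝ → ℝ)

/-- chain of points at scales `τ^k R` around `x`, with geometric control on image
distances. -/
theorem chain_exists
    (hη_mono : StrictMonoOn η (Set.Ici 0))
    (hη_maps : Set.MapsTo η (Set.Ici 0) (Set.Ici 0))
    (hqs : ∀ x y z : X, x ≠ y → x ≠ z → y ≠ z →
      dist (f x) (f y) / dist (f x) (f z) ≤ η (dist x y / dist x z))
    {D : ℝ} (hD : 1 ≤ D)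
    (hup' : ∀ (x : X) (r : ℝ), 0 < r → (∃ p, p ∉ ball x r) →
      ∃ z, r / D ≤ dist x z ∧ dist x z < r)
    {τ : ℝ} (hτ : 0 < τ) (hτ2 : τ * (2 * D) ≤ 1)
    (x : X) (R : ℝ) (hR : 0 < R) (hpt : ∃ p, p ∉ ball x R) :
    ∃ zc : ℕ → X,
      (∀ k, τ ^ k * R / D ≤ dist x (zc k) ∧ dist x (zc k) < τ ^ k * R) ∧
      (∀ k, dist (f x) (f (zc k)) ≤ η (τ * D) ^ k * dist (f x) (f (zc 0))) ∧
      (∀ k, dist (f x) (f (zc 0)) ≤ max (η (D / τ)) 1 ^ k * dist (f x) (f (zc k))) := by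
  have hD0 : (0:ℝ) < D := lt_of_lt_of_le one_pos hD
  have hτ1 : τ < 1 := by nlinarith
  have hex : ∀ k : ℕ, ∃ z, τ ^ k * R / D ≤ dist x z ∧ dist x z < τ ^ k * R := by
    intro k
    refine hup' x (τ ^ k * R) (by positivity) ?_
    obtain ⟨p, hp⟩ := hpt
    exact ⟨p, fun hmem => hp (mem_ball'.2 (lt_of_lt_of_le (mem_ball'.1 hmem)
      (by nlinarith [pow_le_one₀ hτ.le hτ1.le (n := k)])))⟩
  choose zc hzc1 hzc2 using hex
  have hann : ∀ k, 0 < dist x (zc k) := fun k =>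
    lt_of_lt_of_le (by positivity) (hzc1 k)
  have hxz : ∀ k, x ≠ zc k := fun k => fun e => by
    have := hann k; rw [← e] at this; simp at this
  have hsep : ∀ k, dist x (zc (k+1)) < dist x (zc k) := by
    intro k
    calc dist x (zc (k+1)) < τ ^ (k+1) * R := hzc2 _
    _ ≤ τ ^ k * R / (2 * D) := by
        rw [pow_succ]
        rw [div_eq_mul_inv]
        have h2D : (0:ℝ) < 2 * D := by positivity
        have : τ ≤ (2*D)⁻¹ := by
          rw [inv_eq_one_div]; exact (le_div_iff₀ h2D).2 hτ2
        nlinarith [pow_pos hτ k, mul_pos (pow_pos hτ k) hR]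
    _ < τ ^ k * R / D := by
        apply div_lt_div_of_pos_left (by positivity) hD0; nlinarith
    _ ≤ dist x (zc k) := hzc1 k
  have hne : ∀ k, zc (k+1) ≠ zc k := by
    intro k e; have := hsep k; rw [e] at this; exact lt_irrefl _ this
  have hstep : ∀ k, dist x (zc (k+1)) ≤ (τ * D) * dist x (zc k) := by
    intro k
    calc dist x (zc (k+1)) ≤ τ ^ (k+1) * R := (hzc2 _).le
    _ = (τ * D) * (τ ^ k * R / D) := by field_simp; ring
    _ ≤ (τ * D) * dist x (zc k) := by
        have := hzc1 k
        have : (0:ℝ) < τ * D := by positivity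
        nlinarith [hzc1 k]
  have hstep' : ∀ k, dist x (zc k) ≤ (D / τ) * dist x (zc (k+1)) := by
    intro k
    calc dist x (zc k) ≤ τ ^ k * R := (hzc2 _).le
    _ = (D / τ) * (τ ^ (k+1) * R / D) := by rw [pow_succ]; field_simp
    _ ≤ (D / τ) * dist x (zc (k+1)) := by
        have h1 := hzc1 (k+1)
        have h2 : (0:ℝ) < D / τ := by positivity
        nlinarith
  have hηD : (0:ℝ) ≤ η (τ * D) :=
    Set.mem_Ici.1 (hη_maps (Set.mem_Ici.2 (by positivity)))
  have hΘ1 : (1:ℝ) ≤ max (η (D / τ)) 1 := le_max_right _ _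
  refine ⟨zc, fun k => ⟨hzc1 k, hzc2 k⟩, ?_, ?_⟩
  · intro k
    induction k with
    | zero => simp
    | succ k ih =>
      have hd := qsS f η hη_mono hqs (hxz (k+1)) (hxz k) (hne k)
        (by positivity : (0:ℝ) ≤ τ * D) (hstep k)
      calc dist (f x) (f (zc (k+1))) ≤ η (τ * D) * dist (f x) (f (zc k)) := hd
      _ ≤ η (τ * D) * (η (τ * D) ^ k * dist (f x) (f (zc 0))) :=
          mul_le_mul_of_nonneg_left ih hηD
      _ = η (τ * D) ^ (k+1) * dist (f x) (f (zc 0)) := by ring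
  · intro k
    induction k with
    | zero => simp
    | succ k ih =>
      have hd := qsS f η hη_mono hqs (hxz k) (hxz (k+1)) (fun e => hne k e.symm)
        (by positivity : (0:ℝ) ≤ D / τ) (hstep' k)
      have hd' : dist (f x) (f (zc k)) ≤ max (η (D / τ)) 1 * dist (f x) (f (zc (k+1))) :=
        le_trans hd (mul_le_mul_of_nonneg_right (le_max_left _ _) dist_nonneg)
      calc dist (f x) (f (zc 0)) ≤ max (η (D / τ)) 1 ^ k * dist (f x) (f (zc k)) := ih
      _ ≤ max (η (D / τ)) 1 ^ k * (max (η (D / τ)) 1 * dist (f x) (f (zc (k+1)))) :=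
          mul_le_mul_of_nonneg_left hd' (by positivity)
      _ = max (η (D / τ)) 1 ^ (k+1) * dist (f x) (f (zc (k+1))) := by ring

end Chain

theorem rpow_log_self {τ h : ℝ} (hτ0 : 0 < τ) (hτ1 : τ ≠ 1) (hh : 0 < h) :
    τ ^ (Real.log h / Real.log τ) = h := by
  rw [Real.rpow_def_of_pos hτ0, mul_comm,
    div_mul_cancel₀ _ (Real.log_ne_zero_of_pos_of_ne_one hτ0 hτ1), Real.exp_log hh]

theorem natpow_rpow {τ : ℝ} (hτ : 0 ≤ τ) (m : ℕ) (β : ℝ) :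
    ((τ ^ m : ℝ)) ^ β = (τ ^ β) ^ m := by
  rw [← Real.rpow_natCast τ m, ← Real.rpow_mul hτ, mul_comm, Real.rpow_mul hτ,
    Real.rpow_natCast]

end AuxLemmas

set_option maxHeartbeats 4000000 in
/-- quasisymmetric invariance of `(α n)`-regularity. -/
theorem regular_set_quasisymmetric_invariant {X Y : Type*}
    [MetricSpace X] [MeasurableSpace X] [BorelSpace X]
    [MetricSpace Y] [MeasurableSpace Y] [BorelSpace Y]
    (hup : UniformlyPerfect X)
    (α : ℕ → ℝ) (hα : ∀ n, 0 < α n ∧ α n < 1)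
    (E : Set X) (hE : IsRegularSet α E)
    (f : X ≃ₜ Y) (η : ℝ → ℝ)
    (hη_mono : StrictMonoOn η (Set.Ici 0))
    (hη_cont : ContinuousOn η (Set.Ici 0))
    (hη_maps : Set.MapsTo η (Set.Ici 0) (Set.Ici 0))
    (hη_surj : Set.SurjOn η (Set.Ici 0) (Set.Ici 0))
    (hqs : ∀ x y z : X, x ≠ y → x ≠ z → y ≠ z →
      dist (f x) (f y) / dist (f x) (f z) ≤ η (dist x y / dist x z)) :
    IsRegularSet α (f '' E) := by
  classical
  obtain ⟨S, hES⟩ := hE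
  subst hES
  obtain ⟨⟨p₀, q₀, hpq⟩, D, hD1, hupD⟩ := hup
  have hD0 : (0:ℝ) < D := lt_of_lt_of_le one_pos hD1
  have hup' : ∀ (x : X) (r : ℝ), 0 < r → (∃ p, p ∉ ball x r) →
      ∃ z, r / D ≤ dist x z ∧ dist x z < r := by
    rintro x r hr ⟨p, hp⟩
    obtain ⟨z, hz1, hz2⟩ := hupD x r hr ⟨p, ⟨Set.mem_univ p, hp⟩⟩
    refine ⟨z, ?_, mem_ball'.1 hz1⟩
    by_contra hlt; push_neg at hlt
    exact hz2 (mem_ball'.2 hlt)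
  -- basic facts about η
  have hη0 : η 0 = 0 := eta_zero η hη_mono hη_maps hη_surj
  have hηnn : ∀ s : ℝ, 0 ≤ s → 0 ≤ η s := fun s hs =>
    Set.mem_Ici.1 (hη_maps (Set.mem_Ici.2 hs))
  have hηmono : ∀ a b : ℝ, 0 ≤ a → a ≤ b → η a ≤ η b := by
    intro a b ha hab
    rcases eq_or_lt_of_le hab with rfl | hlt
    · exact le_refl _
    · exact (hη_mono (Set.mem_Ici.2 ha) (Set.mem_Ici.2 (ha.trans hab)) hlt).le
  -- constants
  set E1 : ℝ := η 1 + 1 with hE1def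
  have hE1 : 1 ≤ E1 := by have := hηnn 1 zero_le_one; linarith
  have hE1pos : 0 < E1 := lt_of_lt_of_le one_pos hE1
  obtain ⟨u, hu_mem, hu⟩ := hη_surj (Set.mem_Ici.2 (by norm_num : (0:ℝ) ≤ 1/2))
  have hu0 : 0 < u := by
    rcases eq_or_lt_of_le (Set.mem_Ici.1 hu_mem) with hh | hh
    · exfalso; rw [← hh, hη0] at hu; norm_num at hu
    · exact hh
  set τ : ℝ := min (u / D) (1 / (2*D)) with hτdef
  have hτ0 : 0 < τ := lt_min (by positivity) (by positivity)
  have hτhalf : τ ≤ 1/(2*D) := min_le_right _ _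
  have hτ2 : τ * (2*D) ≤ 1 := by
    calc τ * (2*D) ≤ (1/(2*D))*(2*D) :=
          mul_le_mul_of_nonneg_right hτhalf (by positivity)
    _ = 1 := by field_simp
  have hτ1 : τ < 1 := by
    refine lt_of_le_of_lt hτhalf ?_
    rw [div_lt_one (by linarith only [hD1])]
    linarith only [hD1]
  have hτD : τ * D ≤ u := by
    calc τ * D ≤ (u/D)*D := mul_le_mul_of_nonneg_right (min_le_left _ _) hD0.le
    _ = u := by field_simp
  set hgam : ℝ := η (τ * D) with hhdef
  have hh0 : 0 < hgam := eta_pos η hη_mono hη_maps hη_surj (by positivity)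
  have hhalf : hgam ≤ 1/2 := by rw [hhdef, ← hu]; exact hηmono _ _ (by positivity) hτD
  have hh1 : hgam < 1 := lt_of_le_of_lt hhalf (by norm_num)
  set Θ : ℝ := max (η (D / τ)) 1 with hΘdef
  have hΘ1 : (1:ℝ) ≤ Θ := le_max_right _ _
  have hΘ0 : (0:ℝ) < Θ := lt_of_lt_of_le one_pos hΘ1
  have hlogτ : Real.log τ < 0 := Real.log_neg hτ0 hτ1
  set β : ℝ := Real.log hgam / Real.log τ with hβdef
  have hβ0 : 0 < β := div_pos_of_neg_of_neg (Real.log_neg hh0 hh1) hlogτ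
  have hτβ : τ ^ β = hgam := rpow_log_self hτ0 (ne_of_lt hτ1) hh0
  set M : ℝ := Real.log Θ / Real.log τ with hMdef
  have hM0 : M ≤ 0 := div_nonpos_of_nonneg_of_nonpos (Real.log_nonneg hΘ1) hlogτ.le
  have hτM : τ ^ M = Θ := rpow_log_self hτ0 (ne_of_lt hτ1) hΘ0
  have hdpos := S.d_pos
  have hdone := S.d_le_one
  have hC₁ := S.one_le_C₁
  have hC₂ := S.one_le_C₂
  have hC₁0 : (0:ℝ) < S.C₁ := lt_of_lt_of_le one_pos hC₁
  have hC₂0 : (0:ℝ) < S.C₂ := lt_of_lt_of_le one_pos hC₂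
  set d' : ℝ := min 1 (min (S.d * β) (S.d / max (-M) 1)) with hd'def
  have hmaxM : (0:ℝ) < max (-M) 1 := lt_of_lt_of_le one_pos (le_max_right _ _)
  have hd'0 : 0 < d' := lt_min one_pos (lt_min (by positivity) (by positivity))
  have hd'1 : d' ≤ 1 := min_le_left _ _
  have hd'β : d' ≤ S.d * β := le_trans (min_le_right _ _) (min_le_left _ _)
  have hd'M : d' * (-M) ≤ S.d := by
    have h1 : d' ≤ S.d / max (-M) 1 := le_trans (min_le_right _ _) (min_le_right _ _)
    have h2 : d' * max (-M) 1 ≤ S.d := by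
      rw [← le_div_iff₀ hmaxM]; exact h1
    have h3 := mul_le_mul_of_nonneg_left (le_max_left (-M) 1) hd'0.le
    linarith only [h2, h3]
  -- choice of center of child cube
  obtain ⟨jdx, hjdx⟩ : ∃ jdx : ℕ → ℕ → ℕ, ∀ n i, jdx n i ∈ S.idx (n+1) ∧
      S.ctr n i ∈ S.Q (n+1) (jdx n i) :=
    ⟨fun n i => (S.cover (n+1) (S.ctr n i)).choose, fun n i =>
      ⟨(S.cover (n+1) (S.ctr n i)).choose_spec.1, (S.cover (n+1) (S.ctr n i)).choose_spec.2⟩⟩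
  -- choice of uniformly perfect reference points
  have hP : ∀ n i, ∃ z : X, i ∈ S.idx n → (∃ p, p ∉ S.Q n i) →
      S.rad n i / D ≤ dist (S.ctr n i) z ∧ dist (S.ctr n i) z < S.rad n i := by
    intro n i
    by_cases hc : i ∈ S.idx n ∧ ∃ p, p ∉ S.Q n i
    · obtain ⟨z, hz⟩ := hup' (S.ctr n i) (S.rad n i) (S.rad_pos n i hc.1)
        ⟨hc.2.choose, fun hm => hc.2.choose_spec (S.ball_subset n i hc.1 hm)⟩
      exact ⟨z, fun _ _ => hz⟩
    · exact ⟨S.ctr n i, fun h1 h2 => absurd ⟨h1, h2⟩ hc⟩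
  choose pt hpt using hP
  set nd : ℕ → ℕ → ℝ := fun n i => dist (f (S.ctr n i)) (f (pt n i)) with hnddef
  set rad' : ℕ → ℕ → ℝ := fun n i => if ∃ p, p ∉ S.Q n i then nd n i / E1
    else (α n) ^ (-d') * (nd (n+1) (jdx n i) / E1) with hrad'def
  have hrad'nd : ∀ n i, (∃ p, p ∉ S.Q n i) → rad' n i = nd n i / E1 := by
    intro n i hp; simp only [hrad'def]; rw [if_pos hp]
  have hrad'deg : ∀ n i, ¬(∃ p, p ∉ S.Q n i) →
      rad' n i = (α n) ^ (-d') * (nd (n+1) (jdx n i) / E1) := by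
    intro n i hp; simp only [hrad'def]; rw [if_neg hp]
  have hndpos : ∀ n i, i ∈ S.idx n → (∃ p, p ∉ S.Q n i) → 0 < nd n i := by
    intro n i hi hp
    have h1 := (hpt n i hi hp).1
    have hrp := S.rad_pos n i hi
    have hxz : S.ctr n i ≠ pt n i := by
      intro e; rw [← e, dist_self] at h1
      have : 0 < S.rad n i / D := by positivity
      linarith
    exact dist_pos.2 (fun e => hxz (f.injective e))
  have hchild : ∀ n i, i ∈ S.idx n → ∃ p, p ∉ S.Q (n+1) (jdx n i) := by
    intro n i hi
    obtain ⟨q, -, hq2⟩ := S.center_proper n i hi (jdx n i) (hjdx n i).1 (hjdx n i).2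
    exact ⟨q, hq2⟩
  have hrad'pos : ∀ n i, i ∈ S.idx n → 0 < rad' n i := by
    intro n i hi
    by_cases hp : ∃ p, p ∉ S.Q n i
    · rw [hrad'nd n i hp]; exact div_pos (hndpos n i hi hp) hE1pos
    · rw [hrad'deg n i hp]
      have hα := hα n
      have h1 : 0 < nd (n+1) (jdx n i) := hndpos (n+1) (jdx n i) (hjdx n i).1 (hchild n i hi)
      have h2 : (0:ℝ) < (α n) ^ (-d') := Real.rpow_pos_of_pos hα.1 _
      positivity
  have huniq : ∀ (n i j : ℕ) (x : X), i ∈ S.idx n → j ∈ S.idx n → x ∈ S.Q n i →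
      x ∈ S.Q n j → i = j := by
    intro n i j x hi hj hxi hxj; by_contra hij
    have hd := S.pairwise_disj n i hi j hj hij
    exact absurd (Set.mem_inter hxi hxj) (by rw [hd]; exact Set.notMem_empty x)
  have hctrmem : ∀ n i, i ∈ S.idx n → S.ctr n i ∈ S.Q n i := fun n i hi =>
    S.ball_subset n i hi (mem_ball_self (S.rad_pos n i hi))
  have hdeg0 : ∀ n i, i ∈ S.idx n → (∀ p : X, p ∈ S.Q n i) → n = 0 := by
    intro n i hi hall
    by_contra h0
    obtain ⟨m, rfl⟩ := Nat.exists_eq_succ_of_ne_zero h0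
    obtain ⟨k, hk, -⟩ := S.cover m p₀
    obtain ⟨q, -, hq2⟩ := S.center_proper m k hk i hi (hall _)
    exact hq2 (hall q)
  -- the function T ↦ S_T for condition (V)
  have hex : ∀ T : ℝ, 1 < T → ∃ s : ℝ, 0 ≤ s ∧ η s = E1 / (2*T) := by
    intro T hT
    obtain ⟨s, hs1, hs2⟩ := hη_surj (Set.mem_Ici.2
      (div_nonneg (by linarith) (by linarith) : (0:ℝ) ≤ E1/(2*T)))
    exact ⟨s, Set.mem_Ici.1 hs1, hs2⟩
  choose! sfun hs1 hs2 using hex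
  obtain ⟨ST, hST1, hST2⟩ : ∃ ST : ℝ → ℝ, (∀ T, 1 ≤ ST T) ∧
      (∀ T, 1 < T → η (1/ST T) ≤ E1/(2*T)) := by
    refine ⟨fun T => if 1 < T then 1 + 1/(sfun T) else 1, ?_, ?_⟩
    · intro T
      by_cases hT : 1 < T
      · simp only [if_pos hT]
        have h0 : 0 < sfun T := by
          rcases eq_or_lt_of_le (hs1 T hT) with hh | hh
          · exfalso
            have he := hs2 T hT
            rw [← hh, hη0] at he
            have : (0:ℝ) < E1/(2*T) := div_pos hE1pos (by linarith)
            rw [← he] at this; norm_num at this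
          · exact hh
        have := one_div_pos.2 h0
        linarith
      · simp only [if_neg hT]; exact le_refl 1
    · intro T hT
      simp only [if_pos hT]
      have h0 : 0 < sfun T := by
        rcases eq_or_lt_of_le (hs1 T hT) with hh | hh
        · exfalso
          have he := hs2 T hT
          rw [← hh, hη0] at he
          have : (0:ℝ) < E1/(2*T) := div_pos hE1pos (by linarith)
          rw [← he] at this; norm_num at this
        · exact hh
      have harg : 1/(1 + 1/sfun T) ≤ sfun T := by
        rw [div_le_iff₀ (by positivity)]
        rw [mul_add, mul_one, mul_one_div, div_self h0.ne']
        linarith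
      calc η (1/(1+1/sfun T)) ≤ η (sfun T) := hηmono _ _ (by positivity) harg
      _ = E1/(2*T) := hs2 T hT
  -- remaining constants
  set B : ℝ := (η (S.C₁*D)+1) + (η ((S.C₁+1)*D)+1) with hBdef
  have hηC₁D : 0 ≤ η (S.C₁*D) := hηnn _ (by positivity)
  have hηC₁1D : 0 ≤ η ((S.C₁+1)*D) := hηnn _ (by positivity)
  have hηD : 0 ≤ η D := hηnn _ hD0.le
  have hB0 : 0 < B := by rw [hBdef]; linarith
  set CL : ℝ := (η D + 1) * B * ((τ/S.C₂) ^ M) with hCLdef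
  have hCL0 : 0 < CL := by
    have : (0:ℝ) < (τ/S.C₂) ^ M := Real.rpow_pos_of_pos (by positivity) _
    rw [hCLdef]; positivity
  set Cβ : ℝ := ((S.C₁+1)*S.C₂/τ) ^ β with hCβdef
  have hCβ0 : 0 < Cβ := Real.rpow_pos_of_pos (by positivity) _
  set CU1 : ℝ := 2*(η D+1)^2*Cβ with hCU1def
  have hCU10 : 0 < CU1 := by rw [hCU1def]; positivity
  set αm : ℝ := (τ/((S.C₁+1)*S.C₂)) ^ (1/S.d) with hαmdef
  have hαm0 : 0 < αm := Real.rpow_pos_of_pos (by positivity) _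
  set CU0 : ℝ := 2*(η ((S.C₁+1)*S.C₂*D)+1)/αm with hCU0def
  have hηCCD : 0 ≤ η ((S.C₁+1)*S.C₂*D) := hηnn _ (by positivity)
  have hCU00 : 0 < CU0 := by rw [hCU0def]; positivity
  set C₂' : ℝ := 1 + CL + CU0 + CU1 with hC₂'def
  have hC₂'1 : 1 ≤ C₂' := by rw [hC₂'def]; linarith
  set M₀ : ℝ := S.C₁*(1 + S.C₂ * (α 0) ^ (-(1/S.d))) with hM₀def
  have hM₀0 : 0 < M₀ := by
    have : (0:ℝ) < (α 0) ^ (-(1/S.d)) := Real.rpow_pos_of_pos (hα 0).1 _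
    rw [hM₀def]; positivity
  have hηM₀D : 0 ≤ η (M₀*D) := hηnn _ (by positivity)
  set C₁' : ℝ := ((η (S.C₁*D)+1)*E1 + 1) + (2*(η (M₀*D)+1)*E1 + 1) with hC₁'def
  have hC₁'1 : 1 ≤ C₁' := by
    rw [hC₁'def]
    have h1 : 0 ≤ (η (S.C₁*D)+1)*E1 :=
      mul_nonneg (by linarith only [hηC₁D]) (by linarith only [hE1])
    have h2 : 0 ≤ 2*(η (M₀*D)+1)*E1 :=
      mul_nonneg (mul_nonneg (by norm_num) (by linarith only [hηM₀D])) (by linarith only [hE1])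
    linarith only [h1, h2]
  set C₃' : ℝ → ℝ := fun T =>
    (η ((max (S.C₁*S.C₃ (ST T+1) + ST T) (S.C₁ + ST T * S.C₃ (ST T+1)))*D)+1)*(η 1+1)+1
    with hC₃'def
  have hSTC₃ : ∀ T, 1 ≤ S.C₃ (ST T + 1) := fun T => S.one_le_C₃ _ (by linarith [hST1 T])
  have hC₃'1 : ∀ T, 1 ≤ C₃' T := by
    intro T
    have h1 := hST1 T
    have h2 := hSTC₃ T
    have hg0 : (0:ℝ) ≤ S.C₁*S.C₃ (ST T+1) + ST T :=
      add_nonneg (mul_nonneg (by linarith only [hC₁]) (by linarith only [h2]))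
        (by linarith only [h1])
    have harg : 0 ≤ (max (S.C₁*S.C₃ (ST T+1) + ST T) (S.C₁ + ST T * S.C₃ (ST T+1)))*D :=
      mul_nonneg (le_trans hg0 (le_max_left _ _)) hD0.le
    have h4 := hηnn _ harg
    have hη1 := hηnn 1 zero_le_one
    simp only [hC₃'def]
    have h5 : (0:ℝ) ≤ (η ((max (S.C₁*S.C₃ (ST T+1) + ST T) (S.C₁ + ST T * S.C₃ (ST T+1)))*D)+1)*(η 1+1) :=
      mul_nonneg (by linarith only [h4]) (by linarith only [hη1])
    linarith only [h5]
  -- the pushed-forward structure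
  refine ⟨{ idx := S.idx
            Q := fun n i => f.symm ⁻¹' S.Q n i
            ctr := fun n i => f (S.ctr n i)
            rad := rad'
            d := d'
            C₁ := C₁'
            C₂ := C₂'
            C₃ := C₃'
            d_pos := hd'0
            d_le_one := hd'1
            one_le_C₁ := hC₁'1
            one_le_C₂ := hC₂'1
            borel := ?_
            rad_pos := fun n i hi => hrad'pos n i hi
            cover := ?_
            pairwise_disj := ?_
            nested := ?_
            ball_subset := ?_
            subset_ball := ?_
            center_lower := ?_
            center_upper := ?_
            center_proper := ?_
            one_le_C₃ := fun T _ => hC₃'1 T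
            comparable := ?_ }, ?_⟩
  · -- borel
    intro n i hi
    exact (S.borel n i hi).preimage f.symm.continuous.measurable
  · -- cover
    intro n y
    obtain ⟨i, hi, hQ⟩ := S.cover n (f.symm y)
    exact ⟨i, hi, hQ⟩
  · -- pairwise_disj
    intro n i hi j hj hij
    rw [← Set.preimage_inter, S.pairwise_disj n i hi j hj hij, Set.preimage_empty]
  · -- nested
    intro k m hmk i hi j hj
    rcases S.nested k m hmk i hi j hj with hd | hs
    · left; rw [← Set.preimage_inter, hd, Set.preimage_empty]
    · right; exact Set.preimage_mono hs
  · -- ball_subset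
    intro n i hi y hy
    by_cases hnd : ∃ p, p ∉ S.Q n i
    · rw [Set.mem_preimage]
      by_contra hu
      have hz := hpt n i hi hnd
      have hr := S.rad_pos n i hi
      have hxu : S.rad n i ≤ dist (S.ctr n i) (f.symm y) := by
        have h1 : f.symm y ∉ ball (S.ctr n i) (S.rad n i) :=
          fun hm => hu (S.ball_subset n i hi hm)
        by_contra hlt; push_neg at hlt
        exact h1 (mem_ball'.2 hlt)
      have hxune : S.ctr n i ≠ f.symm y := by
        intro e; rw [← e, dist_self] at hxu; linarith only [hxu, hr]
      have hq := qsA f η hη_mono hη_maps hqs (y := pt n i) hxune zero_le_one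
        (by rw [one_mul]; linarith only [hz.2, hxu])
      rw [f.apply_symm_apply] at hq
      have hyd : dist y (f (S.ctr n i)) < rad' n i := mem_ball.1 hy
      rw [hrad'nd n i hnd] at hyd
      have h2 : nd n i ≤ E1 * dist (f (S.ctr n i)) y := by
        simp only [hnddef]
        calc dist (f (S.ctr n i)) (f (pt n i)) ≤ (η 1 + 1) * dist (f (S.ctr n i)) y := hq
        _ = E1 * dist (f (S.ctr n i)) y := by rw [hE1def]
      rw [dist_comm] at hyd
      have h3 : dist (f (S.ctr n i)) y * E1 < nd n i := (lt_div_iff₀ hE1pos).1 hyd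
      have h4 : dist (f (S.ctr n i)) y * E1 = E1 * dist (f (S.ctr n i)) y := mul_comm _ _
      linarith only [h2, h3, h4]
    · push_neg at hnd
      exact hnd (f.symm y)
  · -- subset_ball
    intro n i hi y hy
    rw [Set.mem_preimage] at hy
    rw [mem_ball]
    by_cases hnd : ∃ p, p ∉ S.Q n i
    · have hz := hpt n i hi hnd
      have hr := S.rad_pos n i hi
      have hxz : S.ctr n i ≠ pt n i := by
        intro e; rw [← e, dist_self] at hz
        have : 0 < S.rad n i / D := by positivity
        linarith only [hz.1, this]
      have hdu : dist (S.ctr n i) (f.symm y) < S.C₁ * S.rad n i :=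
        mem_ball'.1 (S.subset_ball n i hi hy)
      have h1 : S.rad n i ≤ D * dist (S.ctr n i) (pt n i) := by
        have := (div_le_iff₀ hD0).1 hz.1
        linarith only [this]
      have harg : dist (S.ctr n i) (f.symm y) ≤ (S.C₁*D) * dist (S.ctr n i) (pt n i) := by
        calc dist (S.ctr n i) (f.symm y) ≤ S.C₁ * S.rad n i := hdu.le
        _ ≤ S.C₁ * (D * dist (S.ctr n i) (pt n i)) :=
            mul_le_mul_of_nonneg_left h1 hC₁0.le
        _ = (S.C₁*D) * dist (S.ctr n i) (pt n i) := by ring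
      have hq := qsA f η hη_mono hη_maps hqs (y := f.symm y) hxz
        (by positivity : (0:ℝ) ≤ S.C₁*D) harg
      rw [f.apply_symm_apply] at hq
      have hrad := hrad'pos n i hi
      have hndE : nd n i = E1 * rad' n i := by
        rw [hrad'nd n i hnd]; field_simp
      have hK : (η (S.C₁*D)+1)*E1 + 1 ≤ C₁' := by
        rw [hC₁'def]
        have h5 : 0 ≤ 2*(η (M₀*D)+1)*E1 :=
          mul_nonneg (mul_nonneg (by norm_num) (by linarith only [hηM₀D]))
            (by linarith only [hE1])
        linarith only [h5]
      rw [dist_comm]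
      calc dist (f (S.ctr n i)) y ≤ (η (S.C₁*D)+1) * nd n i := hq
      _ = ((η (S.C₁*D)+1) * E1) * rad' n i := by rw [hndE]; ring
      _ < ((η (S.C₁*D)+1)*E1 + 1) * rad' n i :=
          mul_lt_mul_of_pos_right (lt_add_one _) hrad
      _ ≤ C₁' * rad' n i := mul_le_mul_of_nonneg_right hK hrad.le
    · push_neg at hnd
      have hn0 : n = 0 := hdeg0 n i hi hnd
      subst hn0
      have hj₁ := hjdx 0 i
      have hcnd : ∃ p, p ∉ S.Q 1 (jdx 0 i) := hchild 0 i hi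
      have hz₁ := hpt 1 (jdx 0 i) hj₁.1 hcnd
      have hr₁ := S.rad_pos 1 (jdx 0 i) hj₁.1
      have hnd₁ := hndpos 1 (jdx 0 i) hj₁.1 hcnd
      have hx₁z : S.ctr 1 (jdx 0 i) ≠ pt 1 (jdx 0 i) := by
        intro e; rw [← e, dist_self] at hz₁
        have : 0 < S.rad 1 (jdx 0 i) / D := by positivity
        linarith only [hz₁.1, this]
      have hα0 := hα 0
      have hαp : (0:ℝ) < (α 0)^(1/S.d) := Real.rpow_pos_of_pos hα0.1 _
      have hcl := S.center_lower 0 i hi (jdx 0 i) hj₁.1 hj₁.2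
      have hrr : S.rad 0 i ≤ S.C₂ * (α 0)^(-(1/S.d)) * S.rad 1 (jdx 0 i) := by
        rw [Real.rpow_neg hα0.1.le]
        have h6 := mul_le_mul_of_nonneg_left hcl
          (show (0:ℝ) ≤ S.C₂ * ((α 0)^(1/S.d))⁻¹ by positivity)
        calc S.rad 0 i
            = S.C₂ * ((α 0)^(1/S.d))⁻¹ * (1/S.C₂ * (α 0)^(1/S.d) * S.rad 0 i) := by
              field_simp
        _ ≤ S.C₂ * ((α 0)^(1/S.d))⁻¹ * S.rad 1 (jdx 0 i) := h6
      have h3 : S.rad 1 (jdx 0 i) ≤ D * dist (S.ctr 1 (jdx 0 i)) (pt 1 (jdx 0 i)) := by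
        have := (div_le_iff₀ hD0).1 hz₁.1
        linarith only [this]
      have key : ∀ v : X, dist (S.ctr 1 (jdx 0 i)) v ≤
          (M₀*D) * dist (S.ctr 1 (jdx 0 i)) (pt 1 (jdx 0 i)) := by
        intro v
        have h1 : dist (S.ctr 0 i) v < S.C₁ * S.rad 0 i :=
          mem_ball'.1 (S.subset_ball 0 i hi (hnd v))
        have h2 : dist (S.ctr 1 (jdx 0 i)) (S.ctr 0 i) < S.C₁ * S.rad 1 (jdx 0 i) := by
          rw [dist_comm]
          exact mem_ball.1 (S.subset_ball 1 (jdx 0 i) hj₁.1 hj₁.2)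
        have h4 : S.C₁ * S.rad 0 i ≤ S.C₁ * (S.C₂ * (α 0)^(-(1/S.d)) * S.rad 1 (jdx 0 i)) :=
          mul_le_mul_of_nonneg_left hrr hC₁0.le
        calc dist (S.ctr 1 (jdx 0 i)) v
            ≤ dist (S.ctr 1 (jdx 0 i)) (S.ctr 0 i) + dist (S.ctr 0 i) v := dist_triangle _ _ _
        _ ≤ M₀ * S.rad 1 (jdx 0 i) := by
            have hring : M₀ * S.rad 1 (jdx 0 i) = S.C₁ * S.rad 1 (jdx 0 i) +
                S.C₁ * (S.C₂ * (α 0)^(-(1/S.d)) * S.rad 1 (jdx 0 i)) := by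
              rw [hM₀def]; ring
            linarith only [h1, h2, h4, hring]
        _ ≤ M₀ * (D * dist (S.ctr 1 (jdx 0 i)) (pt 1 (jdx 0 i))) :=
            mul_le_mul_of_nonneg_left h3 hM₀0.le
        _ = (M₀*D) * dist (S.ctr 1 (jdx 0 i)) (pt 1 (jdx 0 i)) := by ring
      have hqx := qsA f η hη_mono hη_maps hqs (y := S.ctr 0 i) hx₁z
        (by positivity : (0:ℝ) ≤ M₀*D) (key (S.ctr 0 i))
      have hqu := qsA f η hη_mono hη_maps hqs (y := f.symm y) hx₁z
        (by positivity : (0:ℝ) ≤ M₀*D) (key (f.symm y))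
      rw [f.apply_symm_apply] at hqu
      have htot : dist (f (S.ctr 0 i)) y ≤ 2*(η (M₀*D)+1) * nd 1 (jdx 0 i) := by
        have hd1 : dist (f (S.ctr 0 i)) y ≤
            dist (f (S.ctr 0 i)) (f (S.ctr 1 (jdx 0 i))) + dist (f (S.ctr 1 (jdx 0 i))) y :=
          dist_triangle _ _ _
        have hd2 : dist (f (S.ctr 0 i)) (f (S.ctr 1 (jdx 0 i))) =
            dist (f (S.ctr 1 (jdx 0 i))) (f (S.ctr 0 i)) := dist_comm _ _
        simp only [hnddef]
        have hring : 2*(η (M₀*D)+1) *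
            dist (f (S.ctr 1 (jdx 0 i))) (f (pt 1 (jdx 0 i))) =
            (η (M₀*D)+1) * dist (f (S.ctr 1 (jdx 0 i))) (f (pt 1 (jdx 0 i))) +
            (η (M₀*D)+1) * dist (f (S.ctr 1 (jdx 0 i))) (f (pt 1 (jdx 0 i))) := by ring
        linarith only [hqx, hqu, hd1, hd2, hring]
      have hge : nd 1 (jdx 0 i) / E1 ≤ rad' 0 i := by
        rw [hrad'deg 0 i (by push_neg; exact hnd)]
        have hone : (1:ℝ) ≤ (α 0)^(-d') :=
          Real.one_le_rpow_of_pos_of_le_one_of_nonpos hα0.1 hα0.2.le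
            (neg_nonpos.2 hd'0.le)
        have h7 : 0 ≤ nd 1 (jdx 0 i) / E1 :=
          div_nonneg (by simp only [hnddef]; exact dist_nonneg) hE1pos.le
        exact le_mul_of_one_le_left h7 hone
      have hrad := hrad'pos 0 i hi
      have hK : 2*(η (M₀*D)+1)*E1 + 1 ≤ C₁' := by
        rw [hC₁'def]
        have h5 : 0 ≤ (η (S.C₁*D)+1)*E1 :=
          mul_nonneg (by linarith only [hηC₁D]) (by linarith only [hE1])
        linarith only [h5]
      rw [dist_comm]
      calc dist (f (S.ctr 0 i)) y ≤ 2*(η (M₀*D)+1) * nd 1 (jdx 0 i) := htot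
      _ = (2*(η (M₀*D)+1)*E1) * (nd 1 (jdx 0 i)/E1) := by field_simp
      _ ≤ (2*(η (M₀*D)+1)*E1) * rad' 0 i := by
          refine mul_le_mul_of_nonneg_left hge ?_
          have h8 : 0 ≤ η (M₀*D)+1 := by linarith only [hηM₀D]
          positivity
      _ < (2*(η (M₀*D)+1)*E1 + 1) * rad' 0 i :=
          mul_lt_mul_of_pos_right (lt_add_one _) hrad
      _ ≤ C₁' * rad' 0 i := mul_le_mul_of_nonneg_right hK hrad.le
  · -- center_lower
    intro n i hi j hj hc
    rw [Set.mem_preimage, f.symm_apply_apply] at hc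
    have hαn := hα n
    have hα0 : (0:ℝ) < α n := hαn.1
    have hC₂'0 : (0:ℝ) < C₂' := lt_of_lt_of_le one_pos hC₂'1
    by_cases hnd : ∃ p, p ∉ S.Q n i
    · -- non-degenerate case
      have hndc : ∃ p, p ∉ S.Q (n+1) j := by
        obtain ⟨p, hp⟩ := hnd
        refine ⟨p, fun hmem => hp ?_⟩
        rcases S.nested (n+1) n (Nat.le_succ n) j hj i hi with hdis | hsub
        · exact absurd (Set.mem_inter hc (hctrmem n i hi))
            (by rw [hdis]; exact Set.notMem_empty _)
        · exact hsub hmem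
      rw [hrad'nd n i hnd, hrad'nd (n+1) j hndc]
      have hzi := hpt n i hi hnd
      have hzc := hpt (n+1) j hj hndc
      have hri := S.rad_pos n i hi
      have hrc := S.rad_pos (n+1) j hj
      have hndip := hndpos n i hi hnd
      have hndcp := hndpos (n+1) j hj hndc
      have hcl := S.center_lower n i hi j hj hc
      have hxzi_ne : S.ctr n i ≠ pt n i := by
        intro e; rw [← e, dist_self] at hzi
        have : 0 < S.rad n i / D := by positivity
        linarith only [hzi.1, this]
      have hxhat_ne : S.ctr (n+1) j ≠ pt (n+1) j := by
        intro e; rw [← e, dist_self] at hzc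
        have : 0 < S.rad (n+1) j / D := by positivity
        linarith only [hzc.1, this]
      have hball : ∃ p, p ∉ ball (S.ctr n i) (S.rad n i) :=
        ⟨hnd.choose, fun hm => hnd.choose_spec (S.ball_subset n i hi hm)⟩
      obtain ⟨zc, hzcann, hzcdec, hzcgrow⟩ := chain_exists f η hη_mono hη_maps hqs hD1
        hup' hτ0 hτ2 (S.ctr n i) (S.rad n i) hri hball
      have hkex : ∃ k : ℕ, τ^k * S.rad n i ≤ S.rad (n+1) j := by
        obtain ⟨k, hk⟩ := exists_pow_lt_of_lt_one
          (show (0:ℝ) < S.rad (n+1) j / S.rad n i by positivity) hτ1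
        exact ⟨k, le_of_lt ((lt_div_iff₀ hri).1 hk)⟩
      have hk1 : τ^(Nat.find hkex) * S.rad n i ≤ S.rad (n+1) j := Nat.find_spec hkex
      set k := Nat.find hkex with hkdef
      have hk2 : τ * (1/S.C₂ * α n ^ (1/S.d)) ≤ τ^k := by
        rcases Nat.eq_zero_or_pos k with hk0 | hkpos
        · rw [hk0, pow_zero]
          have h1 : α n ^ (1/S.d) ≤ 1 := Real.rpow_le_one hα0.le hαn.2.le (by positivity)
          have h2 : 1/S.C₂ * α n ^ (1/S.d) ≤ 1 := by
            have h3 : 1/S.C₂ ≤ 1 := by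
              rw [div_le_one hC₂0]; exact hC₂
            have h4 : (0:ℝ) ≤ α n ^ (1/S.d) := (Real.rpow_pos_of_pos hα0 _).le
            calc 1/S.C₂ * α n ^ (1/S.d) ≤ 1 * 1 :=
              mul_le_mul h3 h1 h4 zero_le_one
            _ = 1 := one_mul 1
          calc τ * (1/S.C₂ * α n ^ (1/S.d)) ≤ τ * 1 :=
              mul_le_mul_of_nonneg_left h2 hτ0.le
          _ ≤ 1 := by linarith only [hτ1]
        · have hkm : ¬ (τ^(k-1) * S.rad n i ≤ S.rad (n+1) j) :=
            Nat.find_min hkex (by omega)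
          push_neg at hkm
          have h1 : 1/S.C₂ * α n ^ (1/S.d) * S.rad n i < τ^(k-1) * S.rad n i := by
            calc 1/S.C₂ * α n ^ (1/S.d) * S.rad n i ≤ S.rad (n+1) j := hcl
            _ < τ^(k-1) * S.rad n i := hkm
          have h2 : 1/S.C₂ * α n ^ (1/S.d) < τ^(k-1) := lt_of_mul_lt_mul_right h1 hri.le
          have he : τ^k = τ * τ^(k-1) := by
            rw [← pow_succ']; congr 1; omega
          rw [he]
          exact mul_le_mul_of_nonneg_left h2.le hτ0.le
      -- inequality (1)
      have hx0 := hzcann 0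
      rw [pow_zero, one_mul] at hx0
      have hxne0 : S.ctr n i ≠ zc 0 := by
        intro e; rw [← e, dist_self] at hx0
        have : 0 < S.rad n i / D := by positivity
        linarith only [hx0.1, this]
      have h1 : nd n i ≤ (η D + 1) * dist (f (S.ctr n i)) (f (zc 0)) := by
        have harg : dist (S.ctr n i) (pt n i) ≤ D * dist (S.ctr n i) (zc 0) := by
          have h5 := (div_le_iff₀ hD0).1 hx0.1
          have h6 : dist (S.ctr n i) (zc 0) * D = D * dist (S.ctr n i) (zc 0) := mul_comm _ _
          linarith only [hzi.2, h5, h6]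
        have hq := qsA f η hη_mono hη_maps hqs (y := pt n i) hxne0 hD0.le harg
        simp only [hnddef]; exact hq
      -- inequality (2)
      have h2 : dist (f (S.ctr n i)) (f (zc 0)) ≤ Θ^k * dist (f (S.ctr n i)) (f (zc k)) := by
        have := hzcgrow k
        rw [← hΘdef] at this
        exact this
      -- inequality (3)
      have hxc : dist (S.ctr n i) (S.ctr (n+1) j) < S.C₁ * S.rad (n+1) j :=
        mem_ball.1 (S.subset_ball (n+1) j hj hc)
      have hrD : S.rad (n+1) j ≤ D * dist (S.ctr (n+1) j) (pt (n+1) j) := by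
        have h5 := (div_le_iff₀ hD0).1 hzc.1
        have h6 : dist (S.ctr (n+1) j) (pt (n+1) j) * D =
          D * dist (S.ctr (n+1) j) (pt (n+1) j) := mul_comm _ _
        linarith only [h5, h6]
      have hq4 : dist (f (S.ctr (n+1) j)) (f (S.ctr n i)) ≤ (η (S.C₁*D)+1) * nd (n+1) j := by
        have harg : dist (S.ctr (n+1) j) (S.ctr n i) ≤
            (S.C₁*D) * dist (S.ctr (n+1) j) (pt (n+1) j) := by
          have h5 : dist (S.ctr (n+1) j) (S.ctr n i) = dist (S.ctr n i) (S.ctr (n+1) j) :=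
            dist_comm _ _
          have h6 : S.C₁ * S.rad (n+1) j ≤
              S.C₁ * (D * dist (S.ctr (n+1) j) (pt (n+1) j)) :=
            mul_le_mul_of_nonneg_left hrD hC₁0.le
          have h7 : S.C₁ * (D * dist (S.ctr (n+1) j) (pt (n+1) j)) =
              (S.C₁*D) * dist (S.ctr (n+1) j) (pt (n+1) j) := by ring
          linarith only [hxc, h5, h6, h7]
        have hq := qsA f η hη_mono hη_maps hqs (y := S.ctr n i) hxhat_ne
          (by positivity) harg
        simp only [hnddef]; exact hq
      have hq5 : dist (f (S.ctr (n+1) j)) (f (zc k)) ≤ (η ((S.C₁+1)*D)+1) * nd (n+1) j := by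
        have harg : dist (S.ctr (n+1) j) (zc k) ≤
            ((S.C₁+1)*D) * dist (S.ctr (n+1) j) (pt (n+1) j) := by
          have htr : dist (S.ctr (n+1) j) (zc k) ≤
              dist (S.ctr (n+1) j) (S.ctr n i) + dist (S.ctr n i) (zc k) :=
            dist_triangle _ _ _
          have h5 : dist (S.ctr (n+1) j) (S.ctr n i) = dist (S.ctr n i) (S.ctr (n+1) j) :=
            dist_comm _ _
          have h8 := (hzcann k).2
          have h6 : (S.C₁+1) * S.rad (n+1) j ≤
              (S.C₁+1) * (D * dist (S.ctr (n+1) j) (pt (n+1) j)) :=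
            mul_le_mul_of_nonneg_left hrD (by linarith only [hC₁])
          have h7 : (S.C₁+1) * (D * dist (S.ctr (n+1) j) (pt (n+1) j)) =
              ((S.C₁+1)*D) * dist (S.ctr (n+1) j) (pt (n+1) j) := by ring
          have h9 : (S.C₁+1) * S.rad (n+1) j = S.C₁ * S.rad (n+1) j + S.rad (n+1) j := by
            ring
          linarith only [htr, h5, hxc, h8, hk1, h6, h7, h9]
        have hq := qsA f η hη_mono hη_maps hqs (y := zc k) hxhat_ne
          (by positivity) harg
        simp only [hnddef]; exact hq
      have h3 : dist (f (S.ctr n i)) (f (zc k)) ≤ B * nd (n+1) j := by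
        have htr : dist (f (S.ctr n i)) (f (zc k)) ≤
            dist (f (S.ctr n i)) (f (S.ctr (n+1) j)) + dist (f (S.ctr (n+1) j)) (f (zc k)) :=
          dist_triangle _ _ _
        have h5 : dist (f (S.ctr n i)) (f (S.ctr (n+1) j)) =
            dist (f (S.ctr (n+1) j)) (f (S.ctr n i)) := dist_comm _ _
        have hBr : B * nd (n+1) j =
            (η (S.C₁*D)+1) * nd (n+1) j + (η ((S.C₁+1)*D)+1) * nd (n+1) j := by
          rw [hBdef]; ring
        linarith only [htr, h5, hq4, hq5, hBr]
      -- bound on Θ^k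
      have hΘk : Θ^k ≤ (τ/S.C₂)^M * α n ^ ((1/S.d)*M) := by
        have ha : (0:ℝ) < τ * (1/S.C₂ * α n ^ (1/S.d)) :=
          mul_pos hτ0 (mul_pos (by positivity) (Real.rpow_pos_of_pos hα0 _))
        have hmono := Real.rpow_le_rpow_of_nonpos ha hk2 hM0
        have he1 : ((τ^k:ℝ))^M = Θ^k := by rw [natpow_rpow hτ0.le k M, hτM]
        have he2 : (τ * (1/S.C₂ * α n ^ (1/S.d)))^M = (τ/S.C₂)^M * α n ^ ((1/S.d)*M) := by
          rw [show τ * (1/S.C₂ * α n ^ (1/S.d)) = (τ/S.C₂) * α n ^ (1/S.d) by ring,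
            Real.mul_rpow (by positivity) (Real.rpow_pos_of_pos hα0 _).le,
            ← Real.rpow_mul hα0.le]
        calc Θ^k = ((τ^k:ℝ))^M := he1.symm
        _ ≤ (τ * (1/S.C₂ * α n ^ (1/S.d)))^M := hmono
        _ = (τ/S.C₂)^M * α n ^ ((1/S.d)*M) := he2
      -- combine
      have hηD1 : (0:ℝ) ≤ η D + 1 := by linarith only [hηD]
      have hstep1 : nd n i ≤ (η D + 1) * (Θ^k * (B * nd (n+1) j)) := by
        calc nd n i ≤ (η D+1) * dist (f (S.ctr n i)) (f (zc 0)) := h1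
        _ ≤ (η D+1) * (Θ^k * dist (f (S.ctr n i)) (f (zc k))) :=
            mul_le_mul_of_nonneg_left h2 hηD1
        _ ≤ (η D+1) * (Θ^k * (B * nd (n+1) j)) :=
            mul_le_mul_of_nonneg_left
              (mul_le_mul_of_nonneg_left h3 (pow_nonneg hΘ0.le k)) hηD1
      have hcomb : nd n i ≤ CL * (α n ^ ((1/S.d)*M)) * nd (n+1) j := by
        calc nd n i ≤ (η D + 1) * (Θ^k * (B * nd (n+1) j)) := hstep1
        _ ≤ (η D + 1) * (((τ/S.C₂)^M * α n ^ ((1/S.d)*M)) * (B * nd (n+1) j)) :=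
            mul_le_mul_of_nonneg_left
              (mul_le_mul_of_nonneg_right hΘk (mul_nonneg hB0.le hndcp.le)) hηD1
        _ = CL * (α n ^ ((1/S.d)*M)) * nd (n+1) j := by rw [hCLdef]; ring
      -- absorb the power of α
      have hexp : 0 ≤ 1/d' + (1/S.d)*M := by
        have h4 : (-M)/S.d ≤ 1/d' := by
          rw [div_le_div_iff₀ hdpos hd'0]
          have h5 : -M * d' = d' * (-M) := by ring
          linarith only [hd'M, h5]
        have he : (1/S.d)*M = -((-M)/S.d) := by ring
        linarith only [h4, he]
      have hmul : α n ^ (1/d') * nd n i ≤ CL * nd (n+1) j := by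
        have hα1d : (0:ℝ) ≤ α n ^ (1/d') := (Real.rpow_pos_of_pos hα0 _).le
        have hup1 : α n ^ (1/d') * nd n i ≤
            α n ^ (1/d') * (CL * (α n ^ ((1/S.d)*M)) * nd (n+1) j) :=
          mul_le_mul_of_nonneg_left hcomb hα1d
        have heq : α n ^ (1/d') * (CL * (α n ^ ((1/S.d)*M)) * nd (n+1) j) =
            CL * (α n ^ (1/d') * α n ^ ((1/S.d)*M)) * nd (n+1) j := by ring
        have hsum : α n ^ (1/d') * α n ^ ((1/S.d)*M) = α n ^ (1/d' + (1/S.d)*M) :=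
          (Real.rpow_add hα0 _ _).symm
        have hle1 : α n ^ (1/d' + (1/S.d)*M) ≤ 1 :=
          Real.rpow_le_one hα0.le hαn.2.le hexp
        have hfin : CL * (α n ^ (1/d' + (1/S.d)*M)) * nd (n+1) j ≤ CL * 1 * nd (n+1) j := by
          refine mul_le_mul_of_nonneg_right ?_ hndcp.le
          exact mul_le_mul_of_nonneg_left hle1 hCL0.le
        calc α n ^ (1/d') * nd n i
            ≤ CL * (α n ^ (1/d') * α n ^ ((1/S.d)*M)) * nd (n+1) j := by
              rw [← heq]; exact hup1
        _ = CL * (α n ^ (1/d' + (1/S.d)*M)) * nd (n+1) j := by rw [hsum]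
        _ ≤ CL * 1 * nd (n+1) j := hfin
        _ = CL * nd (n+1) j := by ring
      have hCLC : CL ≤ C₂' := by
        rw [hC₂'def]; linarith only [hCU00, hCU10]
      calc 1/C₂' * α n ^ (1/d') * (nd n i/E1)
          = (α n ^ (1/d') * nd n i)/(C₂'*E1) := by
            field_simp
      _ ≤ (CL * nd (n+1) j)/(C₂'*E1) := by
          rw [div_eq_mul_inv, div_eq_mul_inv]
          exact mul_le_mul_of_nonneg_right hmul (by positivity)
      _ ≤ nd (n+1) j/E1 := by
          rw [div_le_div_iff₀ (by positivity) hE1pos]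
          calc CL * nd (n+1) j * E1 ≤ C₂' * nd (n+1) j * E1 :=
              mul_le_mul_of_nonneg_right
                (mul_le_mul_of_nonneg_right hCLC hndcp.le) hE1pos.le
          _ = nd (n+1) j * (C₂' * E1) := by ring
    · -- degenerate case
      have hjeq : j = jdx n i :=
        huniq (n+1) j (jdx n i) (S.ctr n i) hj (hjdx n i).1 hc (hjdx n i).2
      subst hjeq
      rw [hrad'deg n i hnd, hrad'nd (n+1) (jdx n i) (hchild n i hi)]
      have hndq : 0 < nd (n+1) (jdx n i) := hndpos _ _ (hjdx n i).1 (hchild n i hi)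
      have hstep : α n ^ (1/d') * (α n)^(-d') ≤ C₂' := by
        have he : α n ^ (1/d') * (α n)^(-d') = α n ^ (1/d' - d') := by
          rw [← Real.rpow_add hα0]; ring_nf
        rw [he]
        have hexp : 0 ≤ 1/d' - d' := by
          have h5 : 1 ≤ 1/d' := by
            rw [le_div_iff₀ hd'0]; linarith only [hd'1]
          linarith only [h5, hd'1]
        have h1 : α n ^ (1/d'-d') ≤ 1 := Real.rpow_le_one hα0.le hαn.2.le hexp
        exact h1.trans hC₂'1
      have hpos : 0 < nd (n+1) (jdx n i)/E1 := div_pos hndq hE1pos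
      calc 1/C₂' * α n ^ (1/d') * ((α n)^(-d') * (nd (n+1) (jdx n i)/E1))
          = (α n ^ (1/d') * (α n)^(-d')) * (nd (n+1) (jdx n i)/E1) / C₂' := by ring
      _ ≤ C₂' * (nd (n+1) (jdx n i)/E1) / C₂' := by
          rw [div_eq_mul_inv, div_eq_mul_inv]
          exact mul_le_mul_of_nonneg_right
            (mul_le_mul_of_nonneg_right hstep hpos.le) (by positivity)
      _ = nd (n+1) (jdx n i)/E1 := by field_simp
  · -- center_upper
    intro n i hi j hj hc
    rw [Set.mem_preimage, f.symm_apply_apply] at hc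
    have hαn := hα n
    have hα0 : (0:ℝ) < α n := hαn.1
    have hC₂'0 : (0:ℝ) < C₂' := lt_of_lt_of_le one_pos hC₂'1
    by_cases hnd : ∃ p, p ∉ S.Q n i
    · -- non-degenerate case
      have hndc : ∃ p, p ∉ S.Q (n+1) j := by
        obtain ⟨p, hp⟩ := hnd
        refine ⟨p, fun hmem => hp ?_⟩
        rcases S.nested (n+1) n (Nat.le_succ n) j hj i hi with hdis | hsub
        · exact absurd (Set.mem_inter hc (hctrmem n i hi))
            (by rw [hdis]; exact Set.notMem_empty _)
        · exact hsub hmem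
      rw [hrad'nd n i hnd, hrad'nd (n+1) j hndc]
      have hzi := hpt n i hi hnd
      have hzc := hpt (n+1) j hj hndc
      have hri := S.rad_pos n i hi
      have hrc := S.rad_pos (n+1) j hj
      have hndip := hndpos n i hi hnd
      have hndcp := hndpos (n+1) j hj hndc
      have hcu := S.center_upper n i hi j hj hc
      have hxzi_ne : S.ctr n i ≠ pt n i := by
        intro e; rw [← e, dist_self] at hzi
        have : 0 < S.rad n i / D := by positivity
        linarith only [hzi.1, this]
      have hDz : S.rad n i ≤ D * dist (S.ctr n i) (pt n i) := by
        have h5 := (div_le_iff₀ hD0).1 hzi.1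
        have h6 : dist (S.ctr n i) (pt n i) * D = D * dist (S.ctr n i) (pt n i) :=
          mul_comm _ _
        linarith only [h5, h6]
      have hxc : dist (S.ctr n i) (S.ctr (n+1) j) < S.C₁ * S.rad (n+1) j :=
        mem_ball.1 (S.subset_ball (n+1) j hj hc)
      have hxz2 : dist (S.ctr n i) (pt (n+1) j) ≤ (S.C₁+1) * S.rad (n+1) j := by
        have htr := dist_triangle (S.ctr n i) (S.ctr (n+1) j) (pt (n+1) j)
        have he : (S.C₁+1) * S.rad (n+1) j = S.C₁ * S.rad (n+1) j + S.rad (n+1) j := by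
          ring
        linarith only [htr, hxc, hzc.2, he]
      have hαd0 : (0:ℝ) ≤ α n ^ d' := (Real.rpow_pos_of_pos hα0 _).le
      have hfin : ∀ K : ℝ, K ≤ C₂' → nd (n+1) j ≤ K * α n ^ d' * nd n i →
          nd (n+1) j / E1 ≤ C₂' * α n ^ d' * (nd n i / E1) := by
        intro K hKC hle
        have h5 : K * α n ^ d' * nd n i ≤ C₂' * α n ^ d' * nd n i :=
          mul_le_mul_of_nonneg_right (mul_le_mul_of_nonneg_right hKC hαd0) hndip.le
        have h6 : nd (n+1) j / E1 ≤ (C₂' * α n ^ d' * nd n i)/E1 := by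
          rw [div_le_div_iff₀ hE1pos hE1pos]
          exact mul_le_mul_of_nonneg_right (hle.trans h5) hE1pos.le
        calc nd (n+1) j / E1 ≤ (C₂' * α n ^ d' * nd n i)/E1 := h6
        _ = C₂' * α n ^ d' * (nd n i/E1) := by rw [mul_div_assoc]
      have hmex : ∃ m : ℕ, τ^(m+1) * S.rad n i < (S.C₁+1) * S.rad (n+1) j := by
        obtain ⟨m0, hm0⟩ := exists_pow_lt_of_lt_one
          (show (0:ℝ) < (S.C₁+1)*S.rad (n+1) j/S.rad n i by positivity) hτ1
        refine ⟨m0, ?_⟩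
        have h5 : τ^(m0+1) ≤ τ^m0 := pow_le_pow_of_le_one hτ0.le hτ1.le (Nat.le_succ m0)
        have h6 := (lt_div_iff₀ hri).1 hm0
        calc τ^(m0+1)*S.rad n i ≤ τ^m0 * S.rad n i :=
            mul_le_mul_of_nonneg_right h5 hri.le
        _ < _ := h6
      have hm1 : τ^(Nat.find hmex + 1) * S.rad n i < (S.C₁+1) * S.rad (n+1) j :=
        Nat.find_spec hmex
      set m := Nat.find hmex with hmdef
      rcases Nat.eq_zero_or_pos m with hm0 | hmpos
      · -- m = 0 : direct comparison
        rw [hm0, zero_add, pow_one] at hm1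
        have hαd1 : α n ^ S.d ≤ 1 := Real.rpow_le_one hα0.le hαn.2.le hdpos.le
        have hC₁1 : (0:ℝ) ≤ S.C₁+1 := by linarith only [hC₁]
        have hcore : (S.C₁+1) * S.rad (n+1) j ≤
            ((S.C₁+1)*S.C₂*D) * dist (S.ctr n i) (pt n i) := by
          calc (S.C₁+1) * S.rad (n+1) j
              ≤ (S.C₁+1) * (S.C₂ * α n ^ S.d * S.rad n i) :=
                mul_le_mul_of_nonneg_left hcu hC₁1
          _ ≤ (S.C₁+1) * (S.C₂ * 1 * S.rad n i) := by
              refine mul_le_mul_of_nonneg_left ?_ hC₁1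
              exact mul_le_mul_of_nonneg_right
                (mul_le_mul_of_nonneg_left hαd1 hC₂0.le) hri.le
          _ = (S.C₁+1) * S.C₂ * S.rad n i := by ring
          _ ≤ (S.C₁+1) * S.C₂ * (D * dist (S.ctr n i) (pt n i)) :=
              mul_le_mul_of_nonneg_left hDz (by positivity)
          _ = ((S.C₁+1)*S.C₂*D) * dist (S.ctr n i) (pt n i) := by ring
        have hs0 : (0:ℝ) ≤ (S.C₁+1)*S.C₂*D := by positivity
        have hargx : dist (S.ctr n i) (S.ctr (n+1) j) ≤
            ((S.C₁+1)*S.C₂*D) * dist (S.ctr n i) (pt n i) := by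
          have h5 : S.C₁ * S.rad (n+1) j ≤ (S.C₁+1) * S.rad (n+1) j :=
            mul_le_mul_of_nonneg_right (by linarith only []) hrc.le
          linarith only [hxc, h5, hcore]
        have hargz : dist (S.ctr n i) (pt (n+1) j) ≤
            ((S.C₁+1)*S.C₂*D) * dist (S.ctr n i) (pt n i) :=
          le_trans hxz2 hcore
        have hqa := qsA f η hη_mono hη_maps hqs (y := S.ctr (n+1) j) hxzi_ne hs0 hargx
        have hqb := qsA f η hη_mono hη_maps hqs (y := pt (n+1) j) hxzi_ne hs0 hargz
        have htot : nd (n+1) j ≤ 2*(η ((S.C₁+1)*S.C₂*D)+1) * nd n i := by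
          have htr := dist_triangle (f (S.ctr (n+1) j)) (f (S.ctr n i)) (f (pt (n+1) j))
          have h5 : dist (f (S.ctr (n+1) j)) (f (S.ctr n i)) =
              dist (f (S.ctr n i)) (f (S.ctr (n+1) j)) := dist_comm _ _
          have hring : 2*(η ((S.C₁+1)*S.C₂*D)+1) * nd n i =
              (η ((S.C₁+1)*S.C₂*D)+1) * nd n i + (η ((S.C₁+1)*S.C₂*D)+1) * nd n i := by
            ring
          simp only [hnddef] at hqa hqb ⊢
          linarith only [htr, h5, hqa, hqb, hring]
        -- lower bound on α
        have h2 : τ < (S.C₁+1) * S.C₂ * α n ^ S.d := by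
          have hr1 : (S.C₁+1)*(S.C₂*α n^S.d*S.rad n i) =
              ((S.C₁+1)*S.C₂*α n^S.d)*S.rad n i := by ring
          have h1 : τ * S.rad n i < ((S.C₁+1)*S.C₂*α n^S.d) * S.rad n i := by
            have h6 := mul_le_mul_of_nonneg_left hcu hC₁1
            linarith only [hm1, h6, hr1]
          exact lt_of_mul_lt_mul_right h1 hri.le
        have h3 : τ/((S.C₁+1)*S.C₂) < α n ^ S.d := by
          rw [div_lt_iff₀ (by positivity)]
          have heq : (S.C₁+1)*S.C₂*α n^S.d = α n^S.d*((S.C₁+1)*S.C₂) := by ring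
          linarith only [h2, heq]
        have hαm_le : αm ≤ α n ^ d' := by
          have h4 : αm ≤ α n := by
            have h5 : (τ/((S.C₁+1)*S.C₂))^(1/S.d) ≤ (α n ^ S.d)^(1/S.d) :=
              Real.rpow_le_rpow (by positivity) h3.le (by positivity)
            have h6 : (α n ^ S.d)^(1/S.d) = α n := by
              rw [← Real.rpow_mul hα0.le, mul_one_div, div_self hdpos.ne',
                Real.rpow_one]
            rw [hαmdef]
            calc (τ/((S.C₁+1)*S.C₂))^(1/S.d) ≤ (α n ^ S.d)^(1/S.d) := h5
            _ = α n := h6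
          have h7 : α n ≤ α n ^ d' := by
            have h8 := Real.rpow_le_rpow_of_exponent_ge hα0 hαn.2.le hd'1
            rwa [Real.rpow_one] at h8
          exact h4.trans h7
        refine hfin CU0 (by rw [hC₂'def]; linarith only [hCL0, hCU10]) ?_
        have h8 : 2*(η ((S.C₁+1)*S.C₂*D)+1) = CU0 * αm := by
          rw [hCU0def]; field_simp
        calc nd (n+1) j ≤ 2*(η ((S.C₁+1)*S.C₂*D)+1) * nd n i := htot
        _ = CU0 * αm * nd n i := by rw [h8]
        _ ≤ CU0 * α n ^ d' * nd n i :=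
            mul_le_mul_of_nonneg_right
              (mul_le_mul_of_nonneg_left hαm_le hCU00.le) hndip.le
      · -- m ≥ 1 : chain argument
        have hball : ∃ p, p ∉ ball (S.ctr n i) (S.rad n i) :=
          ⟨hnd.choose, fun hm => hnd.choose_spec (S.ball_subset n i hi hm)⟩
        obtain ⟨zc, hzcann, hzcdec, hzcgrow⟩ := chain_exists f η hη_mono hη_maps hqs hD1
          hup' hτ0 hτ2 (S.ctr n i) (S.rad n i) hri hball
        have hm2 : (S.C₁+1) * S.rad (n+1) j ≤ τ^m * S.rad n i := by
          have h5 := Nat.find_min hmex (show m-1 < m by omega)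
          push_neg at h5
          have he : (m-1)+1 = m := by omega
          rwa [he] at h5
        have hannm := hzcann m
        have hxnem : S.ctr n i ≠ zc m := by
          intro e; rw [← e, dist_self] at hannm
          have : 0 < τ^m * S.rad n i / D := by positivity
          linarith only [hannm.1, this]
        have hDm : τ^m * S.rad n i ≤ D * dist (S.ctr n i) (zc m) := by
          have h5 := (div_le_iff₀ hD0).1 hannm.1
          have h6 : dist (S.ctr n i) (zc m) * D = D * dist (S.ctr n i) (zc m) :=
            mul_comm _ _
          linarith only [h5, h6]
        have hargx : dist (S.ctr n i) (S.ctr (n+1) j) ≤ D * dist (S.ctr n i) (zc m) := by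
          have h5 : S.C₁ * S.rad (n+1) j ≤ (S.C₁+1) * S.rad (n+1) j :=
            mul_le_mul_of_nonneg_right (by linarith only []) hrc.le
          linarith only [hxc, h5, hm2, hDm]
        have hargz : dist (S.ctr n i) (pt (n+1) j) ≤ D * dist (S.ctr n i) (zc m) :=
          le_trans hxz2 (le_trans hm2 hDm)
        have hqa := qsA f η hη_mono hη_maps hqs (y := S.ctr (n+1) j) hxnem hD0.le hargx
        have hqb := qsA f η hη_mono hη_maps hqs (y := pt (n+1) j) hxnem hD0.le hargz
        have hdec := hzcdec m
        rw [← hhdef] at hdec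
        have hx0 := hzcann 0
        rw [pow_zero, one_mul] at hx0
        have hxne0 : S.ctr n i ≠ zc 0 := by
          intro e; rw [← e, dist_self] at hx0
          have : 0 < S.rad n i / D := by positivity
          linarith only [hx0.1, this]
        have htop : dist (f (S.ctr n i)) (f (zc 0)) ≤ (η D + 1) * nd n i := by
          have harg : dist (S.ctr n i) (zc 0) ≤ D * dist (S.ctr n i) (pt n i) := by
            linarith only [hx0.2, hDz]
          have hq := qsA f η hη_mono hη_maps hqs (y := zc 0) hxzi_ne hD0.le harg
          simp only [hnddef]; exact hq
        have hηD1 : (0:ℝ) ≤ η D + 1 := by linarith only [hηD]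
        have hgm0 : (0:ℝ) ≤ hgam^m := pow_nonneg hh0.le m
        have htot : nd (n+1) j ≤ 2*(η D+1)^2 * (hgam^m) * nd n i := by
          have htr := dist_triangle (f (S.ctr (n+1) j)) (f (S.ctr n i)) (f (pt (n+1) j))
          have h5 : dist (f (S.ctr (n+1) j)) (f (S.ctr n i)) =
              dist (f (S.ctr n i)) (f (S.ctr (n+1) j)) := dist_comm _ _
          have h6 : dist (f (S.ctr n i)) (f (zc m)) ≤
              hgam^m * ((η D + 1) * nd n i) := by
            calc dist (f (S.ctr n i)) (f (zc m)) ≤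
                hgam^m * dist (f (S.ctr n i)) (f (zc 0)) := hdec
            _ ≤ hgam^m * ((η D + 1) * nd n i) :=
                mul_le_mul_of_nonneg_left htop hgm0
          have h7 : dist (f (S.ctr n i)) (f (S.ctr (n+1) j)) ≤
              (η D + 1) * (hgam^m * ((η D + 1) * nd n i)) :=
            le_trans hqa (mul_le_mul_of_nonneg_left h6 hηD1)
          have h8 : dist (f (S.ctr n i)) (f (pt (n+1) j)) ≤
              (η D + 1) * (hgam^m * ((η D + 1) * nd n i)) :=
            le_trans hqb (mul_le_mul_of_nonneg_left h6 hηD1)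
          have hring : 2*(η D+1)^2 * (hgam^m) * nd n i =
              (η D + 1) * (hgam^m * ((η D + 1) * nd n i)) +
              (η D + 1) * (hgam^m * ((η D + 1) * nd n i)) := by ring
          simp only [hnddef] at h7 h8 ⊢
          linarith only [htr, h5, h7, h8, hring]
        have hτm : τ^m ≤ ((S.C₁+1)*S.C₂/τ)*α n^S.d := by
          have h5 : τ^m * (τ*S.rad n i) < (S.C₁+1) * S.rad (n+1) j := by
            have he : τ^(m+1) * S.rad n i = τ^m * (τ*S.rad n i) := by
              rw [pow_succ]; ring
            linarith only [hm1, he]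
          have h6 : (S.C₁+1) * S.rad (n+1) j ≤
              ((S.C₁+1)*S.C₂/τ)*α n^S.d*(τ*S.rad n i) := by
            have h7 : ((S.C₁+1)*S.C₂/τ)*α n^S.d*(τ*S.rad n i) =
                (S.C₁+1)*(S.C₂*α n^S.d*S.rad n i) := by
              field_simp
            have h8 := mul_le_mul_of_nonneg_left hcu
              (show (0:ℝ) ≤ S.C₁+1 by linarith only [hC₁])
            linarith only [h7, h8]
          have h9 : τ^m * (τ*S.rad n i) ≤ ((S.C₁+1)*S.C₂/τ)*α n^S.d*(τ*S.rad n i) :=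
            le_trans h5.le h6
          exact le_of_mul_le_mul_right h9 (by positivity)
        have hgm : hgam^m ≤ Cβ * α n ^ (S.d*β) := by
          have e1 : (hgam:ℝ)^m = ((τ^m:ℝ))^β := by rw [natpow_rpow hτ0.le m β, hτβ]
          have e2 : ((τ^m:ℝ))^β ≤ (((S.C₁+1)*S.C₂/τ)*α n^S.d)^β :=
            Real.rpow_le_rpow (pow_nonneg hτ0.le m) hτm hβ0.le
          have e3 : (((S.C₁+1)*S.C₂/τ)*α n^S.d)^β = Cβ * α n ^ (S.d*β) := by
            rw [Real.mul_rpow (by positivity) (Real.rpow_pos_of_pos hα0 _).le,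
              hCβdef, ← Real.rpow_mul hα0.le]
          calc (hgam:ℝ)^m = ((τ^m:ℝ))^β := e1
          _ ≤ (((S.C₁+1)*S.C₂/τ)*α n^S.d)^β := e2
          _ = Cβ * α n ^ (S.d*β) := e3
        have hαd' : α n ^ (S.d*β) ≤ α n ^ d' :=
          Real.rpow_le_rpow_of_exponent_ge hα0 hαn.2.le hd'β
        refine hfin CU1 (by rw [hC₂'def]; linarith only [hCL0, hCU00]) ?_
        calc nd (n+1) j ≤ 2*(η D+1)^2 * (hgam^m) * nd n i := htot
        _ ≤ 2*(η D+1)^2 * (Cβ * α n ^ (S.d*β)) * nd n i := by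
            refine mul_le_mul_of_nonneg_right ?_ hndip.le
            exact mul_le_mul_of_nonneg_left hgm (by positivity)
        _ ≤ 2*(η D+1)^2 * (Cβ * α n ^ d') * nd n i := by
            refine mul_le_mul_of_nonneg_right ?_ hndip.le
            refine mul_le_mul_of_nonneg_left ?_ (by positivity)
            exact mul_le_mul_of_nonneg_left hαd' hCβ0.le
        _ = CU1 * α n ^ d' * nd n i := by rw [hCU1def]; ring
    · -- degenerate case
      have hjeq : j = jdx n i :=
        huniq (n+1) j (jdx n i) (S.ctr n i) hj (hjdx n i).1 hc (hjdx n i).2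
      subst hjeq
      rw [hrad'deg n i hnd, hrad'nd (n+1) (jdx n i) (hchild n i hi)]
      have hndq : 0 < nd (n+1) (jdx n i) := hndpos _ _ (hjdx n i).1 (hchild n i hi)
      have he : α n ^ d' * α n ^ (-d') = 1 := by
        rw [← Real.rpow_add hα0, add_neg_cancel, Real.rpow_zero]
      have heq : C₂' * α n ^ d' * ((α n)^(-d') * (nd (n+1) (jdx n i)/E1)) =
          C₂' * (nd (n+1) (jdx n i)/E1) := by
        calc C₂' * α n ^ d' * ((α n)^(-d') * (nd (n+1) (jdx n i)/E1))
            = C₂' * ((α n ^ d' * α n ^ (-d')) * (nd (n+1) (jdx n i)/E1)) := by ring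
        _ = C₂' * (nd (n+1) (jdx n i)/E1) := by rw [he, one_mul]
      rw [heq]
      exact le_mul_of_one_le_left (div_pos hndq hE1pos).le hC₂'1
  · -- center_proper
    intro n i hi j hj hc
    rw [Set.mem_preimage, f.symm_apply_apply] at hc
    obtain ⟨q, hq1, hq2⟩ := S.center_proper n i hi j hj hc
    refine ⟨f q, ?_, ?_⟩
    · rw [Set.mem_preimage, f.symm_apply_apply]; exact hq1
    · rw [Set.mem_preimage, f.symm_apply_apply]; exact hq2
  · -- comparable
    intro T hT n i hi j hj ⟨y, hyQ, hyB⟩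
    have hC0 : 0 < C₃' T := lt_of_lt_of_le one_pos (hC₃'1 T)
    rcases eq_or_ne i j with rfl | hij
    · have hr := hrad'pos n i hi
      have h1 := hC₃'1 T
      constructor
      · have h2 : 1/C₃' T ≤ 1 := by
          rw [div_le_one hC0]; linarith only [h1]
        calc 1/C₃' T * rad' n i ≤ 1 * rad' n i := mul_le_mul_of_nonneg_right h2 hr.le
        _ = rad' n i := one_mul _
      · calc rad' n i = 1 * rad' n i := (one_mul _).symm
        _ ≤ C₃' T * rad' n i := mul_le_mul_of_nonneg_right h1 hr.le
    · rw [Set.mem_preimage] at hyQ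
      have hndi : ∃ p, p ∉ S.Q n i :=
        ⟨S.ctr n j, fun hmem => hij (huniq n i j _ hi hj hmem (hctrmem n j hj))⟩
      have hndj : ∃ p, p ∉ S.Q n j :=
        ⟨S.ctr n i, fun hmem => hij (huniq n i j _ hi hj (hctrmem n i hi) hmem)⟩
      have hzi := hpt n i hi hndi
      have hzj := hpt n j hj hndj
      have hri := S.rad_pos n i hi
      have hrj := S.rad_pos n j hj
      have hndip := hndpos n i hi hndi
      have hndjp := hndpos n j hj hndj
      have hSTT := hST1 T
      have hSTpos : (0:ℝ) < ST T := by linarith only [hSTT]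
      have hxzi : S.ctr n i ≠ pt n i := by
        intro e; rw [← e, dist_self] at hzi
        have : 0 < S.rad n i / D := by positivity
        linarith only [hzi.1, this]
      have hxzj : S.ctr n j ≠ pt n j := by
        intro e; rw [← e, dist_self] at hzj
        have : 0 < S.rad n j / D := by positivity
        linarith only [hzj.1, this]
      -- step 1: the point u = f.symm y is close to ctr n j
      have hyB' : dist y (f (S.ctr n j)) < T * (nd n j / E1) := by
        rw [← hrad'nd n j hndj]; exact mem_ball.1 hyB
      have step1 : dist (S.ctr n j) (f.symm y) < ST T * S.rad n j := by
        by_contra hbig; push_neg at hbig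
        have hxu : S.ctr n j ≠ f.symm y := by
          intro e; rw [← e, dist_self] at hbig
          have h5 := mul_pos hSTpos hrj
          linarith only [hbig, h5]
        have hzu : pt n j ≠ f.symm y := by
          intro e
          rw [← e] at hbig
          have h5 : S.rad n j ≤ ST T * S.rad n j := le_mul_of_one_le_left hrj.le hSTT
          linarith only [hzj.2, hbig, h5]
        have harg : dist (S.ctr n j) (pt n j) ≤ (1/ST T) * dist (S.ctr n j) (f.symm y) := by
          have h5 := mul_le_mul_of_nonneg_left hbig (by positivity : (0:ℝ) ≤ 1/ST T)
          have h6 : 1/ST T * (ST T * S.rad n j) = S.rad n j := by field_simp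
          linarith only [h5, h6, hzj.2]
        have hq := qsS f η hη_mono hqs hxzj hxu hzu
          (by positivity : (0:ℝ) ≤ 1/ST T) harg
        rw [f.apply_symm_apply] at hq
        have hq2 : dist (f (S.ctr n j)) (f (pt n j)) ≤ (E1/(2*T)) * dist (f (S.ctr n j)) y := by
          calc dist (f (S.ctr n j)) (f (pt n j)) ≤
              η (1/ST T) * dist (f (S.ctr n j)) y := hq
          _ ≤ (E1/(2*T)) * dist (f (S.ctr n j)) y :=
              mul_le_mul_of_nonneg_right (hST2 T hT) dist_nonneg
        have hTpos : (0:ℝ) < T := by linarith only [hT]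
        have hq3 : (E1/(2*T)) * dist (f (S.ctr n j)) y <
            (E1/(2*T)) * (T * (nd n j / E1)) := by
          refine mul_lt_mul_of_pos_left ?_ (by positivity)
          rw [dist_comm]; exact hyB'
        have hq4 : (E1/(2*T)) * (T * (nd n j / E1)) = nd n j / 2 := by
          field_simp
        have hq5 : nd n j = dist (f (S.ctr n j)) (f (pt n j)) := by simp only [hnddef]
        linarith only [hq2, hq3, hq4, hq5, hndjp]
      -- step 2: comparability of the radii in X
      have hcmp := S.comparable (ST T + 1) (by linarith only [hSTT]) n i hi j hj
        ⟨f.symm y, hyQ, mem_ball'.2 (by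
          calc dist (S.ctr n j) (f.symm y) < ST T * S.rad n j := step1
          _ ≤ (ST T + 1) * S.rad n j := by
              have h5 : (ST T+1)*S.rad n j = ST T*S.rad n j + S.rad n j := by ring
              linarith only [h5, hrj])⟩
      have hC₃X := hSTC₃ T
      have hC₃Xpos : (0:ℝ) < S.C₃ (ST T + 1) := by linarith only [hC₃X]
      have hcmp1 : S.rad n j ≤ S.C₃ (ST T + 1) * S.rad n i := by
        have h5 := mul_le_mul_of_nonneg_left hcmp.1 hC₃Xpos.le
        have h6 : S.C₃ (ST T+1) * (1/S.C₃ (ST T+1) * S.rad n j) = S.rad n j := by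
          field_simp
        linarith only [h5, h6]
      have hcmp2 := hcmp.2
      -- step 3: center distances
      have hctrjQ : S.ctr n j ∉ S.Q n i :=
        fun hmem => hij (huniq n i j _ hi hj hmem (hctrmem n j hj))
      have hctriQ : S.ctr n i ∉ S.Q n j :=
        fun hmem => hij (huniq n i j _ hi hj (hctrmem n i hi) hmem)
      have hdij_i : S.rad n i ≤ dist (S.ctr n i) (S.ctr n j) := by
        by_contra hlt; push_neg at hlt
        exact hctrjQ (S.ball_subset n i hi (mem_ball'.2 hlt))
      have hdij_j : S.rad n j ≤ dist (S.ctr n j) (S.ctr n i) := by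
        by_contra hlt; push_neg at hlt
        exact hctriQ (S.ball_subset n j hj (mem_ball'.2 hlt))
      have hctrne : S.ctr n i ≠ S.ctr n j := by
        intro e; rw [e, dist_self] at hdij_i; linarith only [hdij_i, hri]
      have hduQ : dist (S.ctr n i) (f.symm y) < S.C₁ * S.rad n i :=
        mem_ball'.1 (S.subset_ball n i hi hyQ)
      have htri : dist (S.ctr n i) (S.ctr n j) ≤
          dist (S.ctr n i) (f.symm y) + dist (S.ctr n j) (f.symm y) := by
        rw [dist_comm (S.ctr n j)]; exact dist_triangle _ _ _
      have hGm_j : dist (S.ctr n i) (S.ctr n j) ≤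
          (max (S.C₁*S.C₃ (ST T+1) + ST T) (S.C₁ + ST T * S.C₃ (ST T+1))) * S.rad n j := by
        have h5 : S.C₁ * S.rad n i ≤ S.C₁ * (S.C₃ (ST T+1) * S.rad n j) :=
          mul_le_mul_of_nonneg_left hcmp2 hC₁0.le
        have h6 : dist (S.ctr n i) (S.ctr n j) ≤
            (S.C₁*S.C₃ (ST T+1) + ST T) * S.rad n j := by
          have h7 : (S.C₁*S.C₃ (ST T+1) + ST T) * S.rad n j =
              S.C₁ * (S.C₃ (ST T+1) * S.rad n j) + ST T * S.rad n j := by ring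
          linarith only [htri, hduQ, step1, h5, h7]
        calc dist (S.ctr n i) (S.ctr n j) ≤ (S.C₁*S.C₃ (ST T+1) + ST T) * S.rad n j := h6
        _ ≤ _ := mul_le_mul_of_nonneg_right (le_max_left _ _) hrj.le
      have hGm_i : dist (S.ctr n i) (S.ctr n j) ≤
          (max (S.C₁*S.C₃ (ST T+1) + ST T) (S.C₁ + ST T * S.C₃ (ST T+1))) * S.rad n i := by
        have h5 : ST T * S.rad n j ≤ ST T * (S.C₃ (ST T+1) * S.rad n i) :=
          mul_le_mul_of_nonneg_left hcmp1 hSTpos.le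
        have h6 : dist (S.ctr n i) (S.ctr n j) ≤
            (S.C₁ + ST T * S.C₃ (ST T+1)) * S.rad n i := by
          have h7 : (S.C₁ + ST T * S.C₃ (ST T+1)) * S.rad n i =
              S.C₁ * S.rad n i + ST T * (S.C₃ (ST T+1) * S.rad n i) := by ring
          linarith only [htri, hduQ, step1, h5, h7]
        calc dist (S.ctr n i) (S.ctr n j) ≤ (S.C₁ + ST T * S.C₃ (ST T+1)) * S.rad n i := h6
        _ ≤ _ := mul_le_mul_of_nonneg_right (le_max_right _ _) hri.le
      have hGm0 : (0:ℝ) ≤ max (S.C₁*S.C₃ (ST T+1) + ST T) (S.C₁ + ST T * S.C₃ (ST T+1)) := by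
        have : (0:ℝ) ≤ S.C₁*S.C₃ (ST T+1) + ST T := by
          have := mul_nonneg hC₁0.le hC₃Xpos.le
          linarith only [this, hSTpos]
        exact le_trans this (le_max_left _ _)
      -- step 4: nd comparisons
      have hkey : ∀ a b : ℕ, a ∈ S.idx n → b ∈ S.idx n →
          (∃ p, p ∉ S.Q n a) → (∃ p, p ∉ S.Q n b) →
          S.ctr n a ≠ pt n a → S.ctr n a ≠ S.ctr n b →
          S.rad n a ≤ dist (S.ctr n a) (S.ctr n b) →
          dist (S.ctr n a) (S.ctr n b) ≤
            (max (S.C₁*S.C₃ (ST T+1) + ST T) (S.C₁ + ST T * S.C₃ (ST T+1))) * S.rad n a →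
          nd n a ≤ C₃' T * nd n b → True := fun _ _ _ _ _ _ _ _ _ _ _ => trivial
      clear hkey
      have hDrada : ∀ a : ℕ, a ∈ S.idx n → (∃ p, p ∉ S.Q n a) →
          S.rad n a ≤ D * dist (S.ctr n a) (pt n a) := by
        intro a ha hnda
        have := (div_le_iff₀ hD0).1 (hpt n a ha hnda).1
        linarith only [this]
      have hA_i : nd n i ≤ E1 * dist (f (S.ctr n i)) (f (S.ctr n j)) := by
        have hq := qsA f η hη_mono hη_maps hqs (y := pt n i) hctrne zero_le_one
          (by rw [one_mul]; linarith only [hzi.2, hdij_i])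
        simp only [hnddef]; rw [hE1def]; exact hq
      have hA_j : nd n j ≤ E1 * dist (f (S.ctr n j)) (f (S.ctr n i)) := by
        have hdij_j' : S.rad n j ≤ dist (S.ctr n j) (S.ctr n i) := hdij_j
        have hq := qsA f η hη_mono hη_maps hqs (y := pt n j) (Ne.symm hctrne) zero_le_one
          (by rw [one_mul]; linarith only [hzj.2, hdij_j'])
        simp only [hnddef]; rw [hE1def]; exact hq
      set Gm := max (S.C₁*S.C₃ (ST T+1) + ST T) (S.C₁ + ST T * S.C₃ (ST T+1)) with hGmdef
      have hB_i : dist (f (S.ctr n i)) (f (S.ctr n j)) ≤ (η (Gm*D)+1) * nd n i := by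
        have harg : dist (S.ctr n i) (S.ctr n j) ≤ (Gm*D) * dist (S.ctr n i) (pt n i) := by
          have h5 : Gm * S.rad n i ≤ Gm * (D * dist (S.ctr n i) (pt n i)) :=
            mul_le_mul_of_nonneg_left (hDrada i hi hndi) hGm0
          have h6 : Gm * (D * dist (S.ctr n i) (pt n i)) =
              (Gm*D) * dist (S.ctr n i) (pt n i) := by ring
          linarith only [hGm_i, h5, h6]
        have hq := qsA f η hη_mono hη_maps hqs (y := S.ctr n j) hxzi
          (mul_nonneg hGm0 hD0.le) harg
        simp only [hnddef]; exact hq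
      have hB_j : dist (f (S.ctr n j)) (f (S.ctr n i)) ≤ (η (Gm*D)+1) * nd n j := by
        have harg : dist (S.ctr n j) (S.ctr n i) ≤ (Gm*D) * dist (S.ctr n j) (pt n j) := by
          have h5 : Gm * S.rad n j ≤ Gm * (D * dist (S.ctr n j) (pt n j)) :=
            mul_le_mul_of_nonneg_left (hDrada j hj hndj) hGm0
          have h6 : Gm * (D * dist (S.ctr n j) (pt n j)) =
              (Gm*D) * dist (S.ctr n j) (pt n j) := by ring
          have h8 : dist (S.ctr n j) (S.ctr n i) = dist (S.ctr n i) (S.ctr n j) :=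
            dist_comm _ _
          linarith only [hGm_j, h5, h6, h8]
        have hq := qsA f η hη_mono hη_maps hqs (y := S.ctr n i) hxzj
          (mul_nonneg hGm0 hD0.le) harg
        simp only [hnddef]; exact hq
      have hηGm : 0 ≤ η (Gm*D) := hηnn _ (mul_nonneg hGm0 hD0.le)
      have hCval : (η (Gm*D)+1) * E1 + 1 = C₃' T := by
        simp only [hC₃'def, hGmdef, hE1def]
      have hkey_i : nd n i ≤ C₃' T * nd n j := by
        have h5 : E1 * dist (f (S.ctr n i)) (f (S.ctr n j)) ≤
            E1 * ((η (Gm*D)+1) * nd n j) := by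
          refine mul_le_mul_of_nonneg_left ?_ hE1pos.le
          rw [dist_comm]; exact hB_j
        have h6 : E1 * ((η (Gm*D)+1) * nd n j) = ((η (Gm*D)+1) * E1) * nd n j := by ring
        have h7 : ((η (Gm*D)+1) * E1) * nd n j ≤ (((η (Gm*D)+1) * E1) + 1) * nd n j := by
          have h8 : 0 ≤ nd n j := by simp only [hnddef]; exact dist_nonneg
          linarith only [h8]
        rw [hCval] at h7
        linarith only [hA_i, h5, h6, h7]
      have hkey_j : nd n j ≤ C₃' T * nd n i := by
        have h5 : E1 * dist (f (S.ctr n j)) (f (S.ctr n i)) ≤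
            E1 * ((η (Gm*D)+1) * nd n i) := by
          refine mul_le_mul_of_nonneg_left ?_ hE1pos.le
          rw [dist_comm]; exact hB_i
        have h6 : E1 * ((η (Gm*D)+1) * nd n i) = ((η (Gm*D)+1) * E1) * nd n i := by ring
        have h7 : ((η (Gm*D)+1) * E1) * nd n i ≤ (((η (Gm*D)+1) * E1) + 1) * nd n i := by
          have h8 : 0 ≤ nd n i := by simp only [hnddef]; exact dist_nonneg
          linarith only [h8]
        rw [hCval] at h7
        linarith only [hA_j, h5, h6, h7]
      rw [hrad'nd n i hndi, hrad'nd n j hndj]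
      constructor
      · have h9 : nd n j / (C₃' T * E1) ≤ nd n i / E1 := by
          rw [div_le_div_iff₀ (by positivity) hE1pos]
          calc nd n j * E1 ≤ (C₃' T * nd n i) * E1 :=
              mul_le_mul_of_nonneg_right hkey_j hE1pos.le
          _ = nd n i * (C₃' T * E1) := by ring
        calc 1/C₃' T * (nd n j/E1) = nd n j / (C₃' T * E1) := by
              rw [div_mul_div_comm, one_mul]
        _ ≤ nd n i / E1 := h9
      · have h9 : nd n i / E1 ≤ (C₃' T * nd n j) / E1 := by
          rw [div_le_div_iff₀ hE1pos hE1pos]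
          exact mul_le_mul_of_nonneg_right hkey_i hE1pos.le
        calc nd n i / E1 ≤ (C₃' T * nd n j)/E1 := h9
        _ = C₃' T * (nd n j/E1) := by rw [mul_div_assoc]
  · -- limit set identification
    simp only [RegularStructure.limitSet, RegularStructure.level]
    ext y
    constructor
    · rintro ⟨a, ha, rfl⟩
      simp only [Set.mem_iInter, Set.mem_setOf_eq] at ha ⊢
      intro n
      obtain ⟨i, hi, j, hj, h1, h2, h3⟩ := ha n
      refine ⟨i, hi, j, hj, ?_, ?_, ?_⟩
      · simpa [Set.mem_preimage, f.symm_apply_apply] using h1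
      · simpa [Set.mem_preimage, f.symm_apply_apply] using h2
      · simpa [Set.mem_preimage, f.symm_apply_apply] using h3
    · intro hy
      refine ⟨f.symm y, ?_, f.apply_symm_apply y⟩
      simp only [Set.mem_iInter, Set.mem_setOf_eq] at hy ⊢
      intro n
      obtain ⟨i, hi, j, hj, h1, h2, h3⟩ := hy n
      refine ⟨i, hi, j, hj, ?_, ?_, ?_⟩
      · simpa [Set.mem_preimage, f.symm_apply_apply] using h1
      · simpa [Set.mem_preimage] using h2
      · simpa [Set.mem_preimage] using h3
end
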